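/- arXiv:1702.04284 — 7 statements merged into one kernel-verified Lean document; each statement's English description precedes it below -/
import Mathlib

section
/- If ψ is a unit vector in the domain of a self-adjoint operator H on a separable Hilbert space, then the survival probability p(t) = |⟨ψ, exp(-itH)ψ⟩|² satisfies p(t) = 1 - t²·(‖Hψ‖² - ⟨ψ,Hψ⟩²) + o(t²) as t → 0. -/
open Filter Asymptotics NormedSpace

private theorem littleO_sq_of_deriv (q q' : ℝ → ℝ)
    (hq : ∀ t, HasDerivAt q (q' t) t)
    (h0 : q 0 = 0) (h0' : q' 0 = 0)
    (h2 : HasDerivAt q' 0 0) :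
    q =o[nhds (0:ℝ)] (fun t : ℝ => t ^ 2) := by
  have hq'o : q' =o[nhds (0:ℝ)] (fun t : ℝ => t) := by
    have h := hasDerivAt_iff_isLittleO.mp h2
    simpa [h0'] using h
  rw [isLittleO_iff]
  intro ε hε
  have h1 := isLittleO_iff.mp hq'o hε
  rw [Metric.eventually_nhds_iff] at h1
  obtain ⟨δ, hδ, hbound⟩ := h1
  rw [Metric.eventually_nhds_iff]
  refine ⟨δ, hδ, fun t ht => ?_⟩
  have key : ∀ s ∈ Set.uIcc (0:ℝ) t, ‖q' s‖ ≤ ε * |t| := by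
    intro s hs
    rw [Set.uIcc_eq_union] at hs
    have hst : |s| ≤ |t| := by
      rcases hs with hs | hs
      · rw [abs_le]
        exact ⟨le_trans (neg_nonpos.mpr (abs_nonneg t)) hs.1,
          le_trans hs.2 (le_abs_self t)⟩
      · rw [abs_le]
        exact ⟨le_trans (neg_abs_le t) hs.1, le_trans hs.2 (abs_nonneg t)⟩
    have hds : dist s 0 < δ := by
      rw [Real.dist_eq, sub_zero]
      exact lt_of_le_of_lt hst (by simpa [Real.dist_eq] using ht)
    calc ‖q' s‖ ≤ ε * ‖s‖ := hbound hds
      _ ≤ ε * |t| := by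
        rw [Real.norm_eq_abs]
        exact mul_le_mul_of_nonneg_left hst hε.le
  have hmv := Convex.norm_image_sub_le_of_norm_hasDerivWithin_le
      (f := q) (f' := q') (s := Set.uIcc (0:ℝ) t) (C := ε * |t|)
      (fun s _ => (hq s).hasDerivWithinAt) key (convex_uIcc _ _)
      Set.left_mem_uIcc Set.right_mem_uIcc
  rw [h0, sub_zero, sub_zero] at hmv
  calc ‖q t‖ ≤ ε * |t| * ‖t‖ := hmv
    _ = ε * ‖t ^ 2‖ := by
      rw [Real.norm_eq_abs, Real.norm_eq_abs, abs_pow]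
      ring

/-- Short-time expansion of the survival probability:
`p t = 1 - t² (‖Hψ‖² - ⟨ψ,Hψ⟩²) + o(t²)` as `t → 0`. -/
theorem survival_probability_short_time
    {E : Type*} [NormedAddCommGroup E] [InnerProductSpace ℂ E] [CompleteSpace E]
    (H : E →L[ℂ] E) (hH : IsSelfAdjoint H) (ψ : E) (hψ : ‖ψ‖ = 1) :
    (fun t : ℝ =>
        ‖(inner ℂ ψ ((NormedSpace.exp ((-(t : ℂ) * Complex.I) • H)) ψ) : ℂ)‖ ^ 2
          - (1 - t ^ 2 * (‖H ψ‖ ^ 2 - (Complex.re (inner ℂ ψ (H ψ) : ℂ)) ^ 2)))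
      =o[nhds (0 : ℝ)] fun t : ℝ => t ^ 2 := by
  classical
  set B : E →L[ℂ] E := (-Complex.I) • H with hB
  set G : ℝ → (E →L[ℂ] E) := fun t => exp (t • B) with hGdef
  have hG : ∀ t : ℝ, HasDerivAt G (G t * B) t := fun t => hasDerivAt_exp_smul_const B t
  have hrw : ∀ t : ℝ, NormedSpace.exp ((-(t : ℂ) * Complex.I) • H) = G t := by
    intro t
    have h1 : ((-(t : ℂ)) * Complex.I) • H = t • B := by
      rw [hB, ← Complex.coe_smul, smul_smul]
      congr 1
      ring
    rw [h1, hGdef]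
  set F : ℝ → ℂ := fun t => (inner ℂ ψ (G t ψ) : ℂ) with hFdef
  set F1 : ℝ → ℂ := fun t => (inner ℂ ψ ((G t * B) ψ) : ℂ) with hF1def
  set F2 : ℝ → ℂ := fun t => (inner ℂ ψ ((G t * B * B) ψ) : ℂ) with hF2def
  set Aψ : (E →L[ℂ] E) →L[ℝ] E :=
    (ContinuousLinearMap.apply ℂ E ψ).restrictScalars ℝ with hAψ
  have hGψ : ∀ t, HasDerivAt (fun t => G t ψ) ((G t * B) ψ) t := by
    intro t
    exact Aψ.hasFDerivAt.comp_hasDerivAt t (hG t)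
  have hGBψ : ∀ t, HasDerivAt (fun t => (G t * B) ψ) ((G t * B * B) ψ) t := by
    intro t
    have hGB : HasDerivAt (fun t => G t * B) (G t * B * B) t := by
      simpa [mul_assoc] using (hG t).mul_const B
    exact Aψ.hasFDerivAt.comp_hasDerivAt t hGB
  have hF : ∀ t, HasDerivAt F (F1 t) t := by
    intro t
    have h := HasDerivAt.inner ℂ (hasDerivAt_const t ψ) (hGψ t)
    simp at h
    exact h
  have hF1 : ∀ t, HasDerivAt F1 (F2 t) t := by
    intro t
    have h := HasDerivAt.inner ℂ (hasDerivAt_const t ψ) (hGBψ t)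
    simp at h
    exact h
  -- values at 0
  have hG0 : G 0 = 1 := by simp [hGdef]
  set a : ℝ := Complex.re (inner ℂ ψ (H ψ) : ℂ) with ha
  have hreal : (inner ℂ ψ (H ψ) : ℂ) = (a : ℂ) := by
    have hsym : (inner ℂ (H ψ) ψ : ℂ) = (inner ℂ ψ (H ψ) : ℂ) := hH.isSymmetric ψ ψ
    have hconj : (starRingEnd ℂ) (inner ℂ ψ (H ψ) : ℂ) = (inner ℂ ψ (H ψ) : ℂ) := by
      rw [inner_conj_symm]
      exact hsym
    exact (Complex.conj_eq_iff_re.mp hconj).symm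
  have hHH : (inner ℂ ψ (H (H ψ)) : ℂ) = ((‖H ψ‖ : ℂ)) ^ 2 :=
    calc (inner ℂ ψ (H (H ψ)) : ℂ) = inner ℂ (H ψ) (H ψ) := (hH.isSymmetric ψ (H ψ)).symm
      _ = ((‖H ψ‖ : ℂ)) ^ 2 := inner_self_eq_norm_sq_to_K (𝕜 := ℂ) (H ψ)
  have hF0 : F 0 = 1 := by
    rw [hFdef]
    simp only [hG0, ContinuousLinearMap.one_apply]
    rw [inner_self_eq_norm_sq_to_K (𝕜 := ℂ), hψ]
    norm_num
  have hF10 : F1 0 = -Complex.I * a := by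
    rw [hF1def]
    simp only [hG0, one_mul, hB, ContinuousLinearMap.smul_apply, inner_smul_right]
    rw [hreal]
  have hF20 : F2 0 = -((‖H ψ‖ : ℂ) ^ 2) := by
    rw [hF2def]
    simp only [hG0, one_mul, hB, ContinuousLinearMap.smul_apply, ContinuousLinearMap.mul_apply,
      map_smul, inner_smul_right, smul_smul]
    rw [hHH]
    simp [Complex.I_mul_I]
  have hre0 : (F 0).re = 1 := by rw [hF0]; simp
  have him0 : (F 0).im = 0 := by rw [hF0]; simp
  have hre1 : (F1 0).re = 0 := by rw [hF10]; simp
  have him1 : (F1 0).im = -a := by rw [hF10]; simp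
  have hre2 : (F2 0).re = -(‖H ψ‖ ^ 2) := by rw [hF20]; simp [← Complex.ofReal_pow]
  have him2 : (F2 0).im = 0 := by rw [hF20]; simp [← Complex.ofReal_pow]
  -- derivatives of real/imaginary parts
  have hu : ∀ t, HasDerivAt (fun t => (F t).re) ((F1 t).re) t := fun t =>
    (Complex.reCLM.hasFDerivAt (x := F t)).comp_hasDerivAt t (hF t)
  have hv : ∀ t, HasDerivAt (fun t => (F t).im) ((F1 t).im) t := fun t =>
    (Complex.imCLM.hasFDerivAt (x := F t)).comp_hasDerivAt t (hF t)
  have hu1 : ∀ t, HasDerivAt (fun t => (F1 t).re) ((F2 t).re) t := fun t =>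
    (Complex.reCLM.hasFDerivAt (x := F1 t)).comp_hasDerivAt t (hF1 t)
  have hv1 : ∀ t, HasDerivAt (fun t => (F1 t).im) ((F2 t).im) t := fun t =>
    (Complex.imCLM.hasFDerivAt (x := F1 t)).comp_hasDerivAt t (hF1 t)
  set c : ℝ := ‖H ψ‖ ^ 2 - a ^ 2 with hc
  set q : ℝ → ℝ := fun t => (F t).re ^ 2 + (F t).im ^ 2 - (1 - t ^ 2 * c) with hqdef
  set q' : ℝ → ℝ := fun t =>
    2 * (F t).re * (F1 t).re + 2 * (F t).im * (F1 t).im + 2 * t * c with hq'def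
  have hq : ∀ t, HasDerivAt q (q' t) t := by
    intro t
    have h1 : HasDerivAt (fun t => (F t).re ^ 2) (2 * (F t).re ^ 1 * (F1 t).re) t :=
      (hu t).pow 2
    have h2 : HasDerivAt (fun t => (F t).im ^ 2) (2 * (F t).im ^ 1 * (F1 t).im) t :=
      (hv t).pow 2
    have h3 : HasDerivAt (fun t : ℝ => 1 - t ^ 2 * c) (-(((2:ℕ) * t ^ 1) * c)) t :=
      ((hasDerivAt_pow 2 t).mul_const c).const_sub 1
    have := (h1.add h2).sub h3
    refine this.congr_deriv ?_
    push_cast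
    ring
  have hq0 : q 0 = 0 := by
    simp [hqdef, hre0, him0]
  have hq'0 : q' 0 = 0 := by
    simp [hq'def, hre0, him0, hre1, him1]
  have hq'deriv : HasDerivAt q' 0 0 := by
    have h1 : HasDerivAt (fun t => 2 * (F t).re * (F1 t).re)
        (2 * (F1 0).re * (F1 0).re + 2 * (F 0).re * (F2 0).re) 0 :=
      ((hu 0).const_mul 2).mul (hu1 0)
    have h2 : HasDerivAt (fun t => 2 * (F t).im * (F1 t).im)
        (2 * (F1 0).im * (F1 0).im + 2 * (F 0).im * (F2 0).im) 0 :=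
      ((hv 0).const_mul 2).mul (hv1 0)
    have h3 : HasDerivAt (fun t : ℝ => 2 * t * c) (2 * 1 * c) 0 :=
      ((hasDerivAt_id 0).const_mul 2).mul_const c
    have htot := (h1.add h2).add h3
    refine htot.congr_deriv ?_
    rw [hre0, him0, hre1, him1, hre2, him2, hc]
    ring
  have hmain := littleO_sq_of_deriv q q' hq hq0 hq'0 hq'deriv
  have hfun : (fun t : ℝ =>
        ‖(inner ℂ ψ ((NormedSpace.exp ((-(t : ℂ) * Complex.I) • H)) ψ) : ℂ)‖ ^ 2
          - (1 - t ^ 2 * (‖H ψ‖ ^ 2 - (Complex.re (inner ℂ ψ (H ψ) : ℂ)) ^ 2))) = q := by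
    funext t
    rw [hrw t]
    simp only [hqdef, hFdef, Complex.sq_norm, Complex.normSq_apply]
    ring
  rw [hfun]
  exact hmain
end

section
/- For a unit vector ψ in the domain of a self-adjoint operator H, the Zeno product formula p^(N)(t) = |⟨ψ, exp(-i(t/N)H)ψ⟩|^{2N} converges to 1 as N → ∞, for every fixed t ∈ ℝ (quantum Zeno effect). -/
open Filter Nat

set_option maxHeartbeats 1000000

/-- Second-order remainder bound for the operator exponential. -/
lemma zeno_exp_remainder_bound {𝔸 : Type*} [NormedRing 𝔸] [NormedAlgebra ℂ 𝔸]
    [CompleteSpace 𝔸] (A : 𝔸) :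
    ‖NormedSpace.exp A - 1 - A‖ ≤ ‖A‖ ^ 2 * Real.exp ‖A‖ := by
  have h := NormedSpace.exp_series_hasSum_exp' (𝕂 := ℂ) A
  set f : ℕ → 𝔸 := fun n => ((n ! : ℂ))⁻¹ • A ^ n with hf
  have h2 : HasSum (fun n => f (n + 2)) (NormedSpace.exp A - (1 + A)) := by
    rw [hasSum_nat_add_iff (f := f) 2]
    convert h using 1
    case e'_3 => rfl
    have : ∑ i ∈ Finset.range 2, f i = 1 + A := by
      rw [Finset.sum_range_succ, Finset.sum_range_one]
      simp [hf]
    rw [this]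
    abel
  have hsum1 : Summable fun n => ‖f (n + 2)‖ :=
    (summable_nat_add_iff 2).mpr (NormedSpace.norm_expSeries_summable' (𝕂 := ℂ) A)
  have hsum2 : Summable fun n : ℕ => ‖A‖ ^ 2 * (‖A‖ ^ n / n !) :=
    (Real.summable_pow_div_factorial ‖A‖).mul_left _
  have hterm : ∀ n : ℕ, ‖f (n + 2)‖ ≤ ‖A‖ ^ 2 * (‖A‖ ^ n / n !) := by
    intro n
    have h1 : ‖f (n + 2)‖ = (((n + 2)! : ℝ))⁻¹ * ‖A ^ (n + 2)‖ := by
      rw [hf, norm_smul]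
      congr 1
      simp
    have h2' : ‖A ^ (n + 2)‖ ≤ ‖A‖ ^ (n + 2) := norm_pow_le' A (by omega)
    have h3 : (((n + 2)! : ℝ))⁻¹ ≤ ((n ! : ℝ))⁻¹ := by
      apply inv_anti₀
      · exact_mod_cast Nat.factorial_pos n
      · exact_mod_cast Nat.factorial_le (by omega)
    calc ‖f (n + 2)‖ = (((n + 2)! : ℝ))⁻¹ * ‖A ^ (n + 2)‖ := h1
      _ ≤ ((n ! : ℝ))⁻¹ * ‖A‖ ^ (n + 2) := by
          apply mul_le_mul h3 h2' (norm_nonneg _)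
          positivity
      _ = ‖A‖ ^ 2 * (‖A‖ ^ n / n !) := by ring
  have hexpR : ∑' n : ℕ, ‖A‖ ^ 2 * (‖A‖ ^ n / n !) = ‖A‖ ^ 2 * Real.exp ‖A‖ := by
    rw [tsum_mul_left]
    congr 1
    rw [Real.exp_eq_exp_ℝ, NormedSpace.exp_eq_tsum_div]
  calc ‖NormedSpace.exp A - 1 - A‖ = ‖NormedSpace.exp A - (1 + A)‖ := by rw [sub_sub]
    _ = ‖∑' n, f (n + 2)‖ := by rw [h2.tsum_eq]
    _ ≤ ∑' n, ‖f (n + 2)‖ := norm_tsum_le_tsum_norm hsum1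
    _ ≤ ∑' n : ℕ, ‖A‖ ^ 2 * (‖A‖ ^ n / n !) := Summable.tsum_le_tsum hterm hsum1 hsum2
    _ = ‖A‖ ^ 2 * Real.exp ‖A‖ := hexpR

/-- If `|x N - 1| ≤ C / N ^ 2` eventually, then `x N ^ N → 1`. -/
lemma zeno_tendsto_pow_self (x : ℕ → ℝ) (hx : ∀ N, 0 ≤ x N) (C : ℝ)
    (h : ∀ N : ℕ, 1 ≤ N → |x N - 1| ≤ C / (N : ℝ) ^ 2) :
    Tendsto (fun N => x N ^ N) atTop (nhds 1) := by
  have hC : 0 ≤ C := by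
    have h1 := h 1 le_rfl
    have := abs_nonneg (x 1 - 1)
    norm_num at h1
    linarith
  apply tendsto_of_tendsto_of_tendsto_of_le_of_le'
    (g := fun N : ℕ => 1 - C / N) (h := fun N : ℕ => Real.exp (C / N))
  · simpa using tendsto_const_nhds.sub (tendsto_const_div_atTop_nhds_zero_nat C)
  · have h1 : Tendsto (fun N : ℕ => C / (N : ℝ)) atTop (nhds 0) :=
      tendsto_const_div_atTop_nhds_zero_nat C
    have := (Real.continuous_exp.tendsto 0).comp h1
    simpa [Function.comp_def] using this
  · filter_upwards [eventually_ge_atTop 1] with N hN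
    have hs1 : (1 : ℝ) ≤ N := by exact_mod_cast hN
    have hs0 : (0 : ℝ) < N := by linarith
    have h1 := (abs_le.mp (h N hN)).1
    have hb : -2 ≤ x N - 1 := by nlinarith [hx N]
    have hber := one_add_mul_le_pow hb N
    have heq : (1 + (x N - 1)) ^ N = x N ^ N := by ring_nf
    have hNd : (N : ℝ) * (C / (N : ℝ) ^ 2) = C / N := by
      field_simp
    have : 1 - C / N ≤ 1 + (N : ℝ) * (x N - 1) := by nlinarith
    linarith [heq ▸ hber]
  · filter_upwards [eventually_ge_atTop 1] with N hN
    have hs1 : (1 : ℝ) ≤ N := by exact_mod_cast hN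
    have hs0 : (0 : ℝ) < N := by linarith
    have h1 := (abs_le.mp (h N hN)).2
    have hxe : x N ≤ Real.exp (C / (N : ℝ) ^ 2) := by
      have := Real.add_one_le_exp (C / (N : ℝ) ^ 2)
      linarith
    calc x N ^ N ≤ Real.exp (C / (N : ℝ) ^ 2) ^ N := pow_le_pow_left₀ (hx N) hxe N
      _ = Real.exp ((N : ℝ) * (C / (N : ℝ) ^ 2)) := by rw [← Real.exp_nat_mul]
      _ = Real.exp (C / N) := by
          congr 1
          field_simp

/-- Quantum Zeno effect: the Zeno product formula
`p^(N)(t) = |⟨ψ, exp(-i(t/N)H)ψ⟩|^(2N)` tends to `1` as `N → ∞`, for every fixed `t`. -/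
theorem quantum_zeno_effect
    {E : Type*} [NormedAddCommGroup E] [InnerProductSpace ℂ E] [CompleteSpace E]
    (H : E →L[ℂ] E) (hH : IsSelfAdjoint H) (ψ : E) (hψ : ‖ψ‖ = 1) (t : ℝ) :
    Tendsto
      (fun N : ℕ =>
        ‖(inner ℂ ψ ((NormedSpace.exp (((-(t / N : ℂ)) * Complex.I) • H)) ψ) : ℂ)‖ ^ (2 * N))
      atTop (nhds 1) := by
  set a : ℝ := |t| * ‖H‖ with ha_def
  have ha : 0 ≤ a := by positivity
  set B : ℝ := a ^ 2 * Real.exp a with hB_def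
  have hB : 0 ≤ B := by positivity
  set K : ℝ := a ^ 2 + 2 * (1 + a) * B + B * B with hK_def
  -- ⟨ψ, Hψ⟩ is real
  set hr : ℝ := (inner ℂ ψ (H ψ) : ℂ).re with hhr_def
  have hsym := hH.isSymmetric
  have hreal : (inner ℂ ψ (H ψ) : ℂ) = (hr : ℂ) := by
    have h1 : (starRingEnd ℂ) (inner ℂ ψ (H ψ) : ℂ) = (inner ℂ ψ (H ψ) : ℂ) := by
      rw [inner_conj_symm]
      exact hsym ψ ψ
    rw [Complex.conj_eq_iff_re] at h1
    exact h1.symm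
  have hhr : |hr| ≤ ‖H‖ := by
    have h1 : ‖(inner ℂ ψ (H ψ) : ℂ)‖ ≤ ‖H‖ := by
      calc ‖(inner ℂ ψ (H ψ) : ℂ)‖ ≤ ‖ψ‖ * ‖H ψ‖ := norm_inner_le_norm _ _
        _ ≤ ‖ψ‖ * (‖H‖ * ‖ψ‖) := by
            apply mul_le_mul_of_nonneg_left (H.le_opNorm ψ) (norm_nonneg _)
        _ = ‖H‖ := by rw [hψ]; ring
    calc |hr| ≤ ‖(inner ℂ ψ (H ψ) : ℂ)‖ := Complex.abs_re_le_norm _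
      _ = ‖(inner ℂ ψ (H ψ) : ℂ)‖ := rfl
      _ ≤ ‖H‖ := h1
  have main : ∀ N : ℕ, 1 ≤ N →
      |‖(inner ℂ ψ ((NormedSpace.exp (((-(t / N : ℂ)) * Complex.I) • H)) ψ) : ℂ)‖ ^ 2 - 1|
        ≤ K / (N : ℝ) ^ 2 := by
    intro N hN
    have hs1 : (1 : ℝ) ≤ N := by exact_mod_cast hN
    have hs0 : (0 : ℝ) < N := by linarith
    set ε : ℝ := ((N : ℝ) ^ 2)⁻¹ with hε_def
    have hε0 : 0 < ε := by positivity
    have hε1 : ε ≤ 1 := by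
      rw [hε_def]
      rw [inv_le_one_iff₀]
      right
      nlinarith
    set A : E →L[ℂ] E := ((-(t / N : ℂ)) * Complex.I) • H with hA_def
    have hnormA : ‖A‖ ≤ a / N := by
      rw [hA_def, norm_smul]
      have h1 : ‖(-(t / N : ℂ)) * Complex.I‖ = |t| / N := by
        simp
      rw [h1, ha_def]
      rw [div_mul_eq_mul_div]
    have hnormAa : ‖A‖ ≤ a := hnormA.trans (div_le_self ha hs1)
    set R : E →L[ℂ] E := NormedSpace.exp A - 1 - A with hR_def
    have hRbound : ‖R‖ ≤ B * ε := by
      calc ‖R‖ ≤ ‖A‖ ^ 2 * Real.exp ‖A‖ := zeno_exp_remainder_bound A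
        _ ≤ (a / N) ^ 2 * Real.exp a := by
            apply mul_le_mul (pow_le_pow_left₀ (norm_nonneg _) hnormA 2)
              (Real.exp_le_exp.mpr hnormAa) (Real.exp_nonneg _) (by positivity)
        _ = B * ε := by rw [hB_def, hε_def, div_pow]; field_simp
    have hexp : NormedSpace.exp A = 1 + A + R := by rw [hR_def]; abel
    set z : ℂ := inner ℂ ψ ((NormedSpace.exp A) ψ) with hz_def
    set r : ℂ := inner ℂ ψ (R ψ) with hr_def2
    have hinner1 : (inner ℂ ψ ψ : ℂ) = 1 := by
      rw [inner_self_eq_norm_sq_to_K, hψ]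
      norm_num
    have hz : z = 1 + (-(t / N : ℂ)) * Complex.I * (hr : ℂ) + r := by
      rw [hz_def, hexp]
      simp only [ContinuousLinearMap.add_apply, ContinuousLinearMap.one_apply,
        ContinuousLinearMap.smul_apply, inner_add_right, inner_smul_right,
        hinner1, hreal, hr_def2, hA_def]
    set u : ℂ := 1 - ((t * hr / N : ℝ) : ℂ) * Complex.I with hu_def
    have hzu : z - u = r := by
      rw [hz, hu_def]
      push_cast
      ring
    have hu2 : ‖u‖ ^ 2 = 1 + (t * hr / N) ^ 2 := by
      rw [Complex.sq_norm, hu_def, Complex.normSq_apply]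
      simp
      ring
    -- bounds
    set az : ℝ := ‖z‖ with haz_def
    set au : ℝ := ‖u‖ with hau_def
    set d : ℝ := ‖z - u‖ with hd_def
    have f1 : 0 ≤ az := norm_nonneg _
    have f2 : 0 ≤ au := norm_nonneg _
    have f3 : 0 ≤ d := norm_nonneg _
    have f4 : d ≤ B * ε := by
      rw [hd_def, hzu]
      have h1 : ‖r‖ = ‖r‖ := rfl
      rw [h1, hr_def2]
      calc ‖(inner ℂ ψ (R ψ) : ℂ)‖ ≤ ‖ψ‖ * ‖R ψ‖ := norm_inner_le_norm _ _
        _ ≤ ‖ψ‖ * (‖R‖ * ‖ψ‖) := by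
            apply mul_le_mul_of_nonneg_left (R.le_opNorm ψ) (norm_nonneg _)
        _ = ‖R‖ := by rw [hψ]; ring
        _ ≤ B * ε := hRbound
    have habs5 : |az - au| ≤ d := by
      rw [haz_def, hau_def, hd_def]
      exact abs_norm_sub_norm_le z u
    have f5a : az - au ≤ d := (abs_le.mp habs5).2
    have f5b : au - az ≤ d := by linarith [(abs_le.mp habs5).1]
    have f8 : d ≤ az + au := by
      rw [hd_def, haz_def, hau_def]
      exact norm_sub_le z u
    set w : ℝ := t * hr / N with hw_def
    have f6 : au ^ 2 = 1 + w ^ 2 := by rw [hau_def, hu2, hw_def]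
    have f7 : w ^ 2 ≤ a ^ 2 * ε := by
      have h1 : |t * hr| ≤ a := by
        rw [abs_mul, ha_def]
        exact mul_le_mul_of_nonneg_left hhr (abs_nonneg t)
      have h2 : (t * hr) ^ 2 ≤ a ^ 2 := by nlinarith [abs_nonneg (t * hr), sq_abs (t * hr)]
      rw [hw_def, div_pow, hε_def, div_eq_mul_inv]
      exact mul_le_mul_of_nonneg_right h2 (by positivity)
    have hau_le : au ≤ 1 + a := by nlinarith
    have hprod1 : au * d ≤ (1 + a) * (B * ε) := mul_le_mul hau_le f4 f3 (by positivity)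
    have hprod2 : d * d ≤ (B * ε) * (B * ε) := mul_le_mul f4 f4 f3 (by positivity)
    have hprod3 : (B * ε) * (B * ε) ≤ B * B * ε := by nlinarith
    have hKe : K / (N : ℝ) ^ 2 = K * ε := by rw [hε_def, div_eq_mul_inv]
    rw [hKe]
    rw [abs_le]
    constructor
    · -- lower bound : -(K*ε) ≤ az^2 - 1, i.e. 1 - az^2 ≤ K*ε
      have hsq : 0 ≤ (az - au + d) * (az + au - d) :=
        mul_nonneg (by linarith) (by linarith)
      nlinarith
    · -- upper bound : az^2 - 1 ≤ K*ε
      have hsq : 0 ≤ (au + d - az) * (au + d + az) :=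
        mul_nonneg (by linarith) (by linarith)
      nlinarith
  have hmain := zeno_tendsto_pow_self
    (fun N => ‖(inner ℂ ψ ((NormedSpace.exp (((-(t / N : ℂ)) * Complex.I) • H)) ψ) : ℂ)‖ ^ 2)
    (fun N => by positivity) K main
  simpa only [pow_mul] using hmain
end

section
/- For a unit vector ψ in the domain of a self-adjoint operator H, with Zeno rate σ² = ‖Hψ‖² - ⟨ψ,Hψ⟩², the product formula p_{N,1/2}(τ) = |⟨ψ, exp(-iτN^{-1/2}H)ψ⟩|^{2N} converges as N → ∞ to exp(-σ²τ²), uniformly in τ on compact subsets of ℝ. -/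
open Filter

section ZenoAux
open NormedSpace Complex Filter
variable {E : Type*} [NormedAddCommGroup E] [InnerProductSpace ℂ E] [CompleteSpace E]

theorem zeno_norm_exp_aux (H : E →L[ℂ] E) (hH : IsSelfAdjoint H) (ψ : E) (s : ℝ) :
    ‖NormedSpace.exp (((-s : ℂ) * Complex.I) • H) ψ‖ = ‖ψ‖ := by
  set A := NormedSpace.exp (((-s : ℂ) * Complex.I) • H) with hA
  have hmem : (((-s : ℂ) * Complex.I) • H) ∈ skewAdjoint (E →L[ℂ] E) := by
    rw [skewAdjoint.mem_iff, star_smul, hH.star_eq, ← neg_smul]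
    congr 1
    simp [Complex.ext_iff]
  have hu : A ∈ unitary (E →L[ℂ] E) := by
    let _ : NormedAlgebra ℚ (E →L[ℂ] E) := .restrictScalars ℚ ℂ (E →L[ℂ] E)
    exact exp_mem_unitary_of_mem_skewAdjoint hmem
  have h1 : star A * A = 1 := (Unitary.mem_iff.mp hu).1
  have h3 : inner ℂ (A ψ) (A ψ) = (inner ℂ ψ ψ : ℂ) := by
    rw [← ContinuousLinearMap.adjoint_inner_right A ψ (A ψ),
      ← ContinuousLinearMap.star_eq_adjoint]
    have : star A (A ψ) = (star A * A) ψ := rfl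
    rw [this, h1]
    rfl
  have h2 := congrArg Complex.re h3
  have h4 : ‖A ψ‖ ^ 2 = ‖ψ‖ ^ 2 := by
    rw [← @inner_self_eq_norm_sq ℂ _ _ _ _ (A ψ), ← @inner_self_eq_norm_sq ℂ _ _ _ _ ψ]
    exact_mod_cast h2
  nlinarith [norm_nonneg (A ψ), norm_nonneg ψ]

theorem zeno_series_aux (H : E →L[ℂ] E) (ψ : E) (c : ℂ) :
    HasSum (fun n : ℕ => ((n.factorial : ℂ))⁻¹ * c ^ n * inner ℂ ψ ((H ^ n) ψ))
      (inner ℂ ψ (NormedSpace.exp (c • H) ψ) : ℂ) := by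
  have hsum : Summable (fun n : ℕ => ((n.factorial : ℂ))⁻¹ • (c • H) ^ n) :=
    NormedSpace.expSeries_summable' (𝕂 := ℂ) (c • H)
  have h1 : HasSum (fun n : ℕ => ((n.factorial : ℂ))⁻¹ • (c • H) ^ n)
      (NormedSpace.exp (c • H)) := by
    rw [NormedSpace.exp_eq_tsum (𝕂 := ℂ)]
    exact hsum.hasSum
  have h2 := h1.mapL (ContinuousLinearMap.apply ℂ E ψ)
  have h3 := h2.mapL (innerSL ℂ ψ)
  convert h3 using 2 with n
  · rfl
  · simp [smul_pow, ContinuousLinearMap.smul_apply, inner_smul_right]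
    ring
  · rfl

theorem zeno_taylor_aux (H : E →L[ℂ] E) (ψ : E) (hψ : ‖ψ‖ = 1) (M : ℝ) (s : ℝ)
    (hs : |s| ≤ M) :
    ‖(inner ℂ ψ (NormedSpace.exp (((-s : ℂ) * Complex.I) • H) ψ) : ℂ) -
        (1 - (s : ℂ) * Complex.I * inner ℂ ψ (H ψ) - (s : ℂ) ^ 2 * inner ℂ ψ ((H ^ 2) ψ) / 2)‖
      ≤ (‖H‖ ^ 3 * Real.exp (M * ‖H‖) / 6) * |s| ^ 3 := by
  set c : ℂ := (-s : ℂ) * Complex.I with hc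
  set u : ℕ → ℂ := fun n => ((n.factorial : ℂ))⁻¹ * c ^ n * inner ℂ ψ ((H ^ n) ψ) with hu
  have h := zeno_series_aux H ψ c
  have hsum : Summable u := h.summable
  have hnc : ‖c‖ = |s| := by
    simp [hc, map_mul]
  -- partial sum computation
  have hpartial : ∑ n ∈ Finset.range 3, u n =
      1 - (s : ℂ) * Complex.I * inner ℂ ψ (H ψ) - (s : ℂ) ^ 2 * inner ℂ ψ ((H ^ 2) ψ) / 2 := by
    rw [Finset.sum_range_succ, Finset.sum_range_succ, Finset.sum_range_one]
    have h0 : (inner ℂ ψ ψ : ℂ) = 1 := by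
      rw [inner_self_eq_norm_sq_to_K, hψ]; norm_num
    simp only [hu, pow_zero, pow_one, pow_two, Nat.factorial]
    have h1 : (1 : E →L[ℂ] E) ψ = ψ := rfl
    rw [h1, h0, hc]
    push_cast
    ring_nf
    rw [Complex.I_sq]
    ring
  have h5 := hsum.sum_add_tsum_nat_add 3
  rw [h.tsum_eq, hpartial] at h5
  have hkey : (inner ℂ ψ ((NormedSpace.exp (c • H)) ψ) : ℂ) -
      (1 - (s : ℂ) * Complex.I * inner ℂ ψ (H ψ) - (s : ℂ) ^ 2 * inner ℂ ψ ((H ^ 2) ψ) / 2) =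
      ∑' n : ℕ, u (n + 3) := by rw [← h5]; ring
  rw [hkey]
  have hfactpos : ∀ n : ℕ, (0:ℝ) < n.factorial := fun n => by positivity
  have hbound : ∀ n : ℕ, ‖u (n + 3)‖ ≤
      ‖H‖ ^ 3 / 6 * |s| ^ 3 * ((|s| * ‖H‖) ^ n / n.factorial) := by
    intro n
    have hip : ‖(inner ℂ ψ ((H ^ (n+3)) ψ) : ℂ)‖ ≤ ‖H‖ ^ (n+3) := by
      calc ‖(inner ℂ ψ ((H ^ (n+3)) ψ) : ℂ)‖ ≤ ‖ψ‖ * ‖(H ^ (n+3)) ψ‖ := norm_inner_le_norm _ _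
        _ ≤ ‖ψ‖ * (‖H ^ (n+3)‖ * ‖ψ‖) := by
            gcongr
            exact (H ^ (n+3)).le_opNorm ψ
        _ ≤ ‖H ^ (n+3)‖ := by rw [hψ]; ring_nf; exact le_refl _
        _ ≤ ‖H‖ ^ (n+3) := norm_pow_le' H (Nat.succ_le_succ (Nat.zero_le _))
    have hnorm : ‖u (n+3)‖ = (((n+3).factorial : ℝ))⁻¹ * |s| ^ (n+3) *
        ‖(inner ℂ ψ ((H ^ (n+3)) ψ) : ℂ)‖ := by
      simp [hu, norm_mul, norm_pow, hnc, norm_inv]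
    have hfact : (6:ℝ) * n.factorial ≤ (n+3).factorial := by
      have := Nat.le_of_dvd (Nat.factorial_pos (3 + n))
        (Nat.factorial_mul_factorial_dvd_factorial_add 3 n)
      have h6 : (3:ℕ).factorial = 6 := rfl
      rw [h6] at this
      rw [Nat.add_comm n 3]
      exact_mod_cast this
    calc ‖u (n+3)‖ = (((n+3).factorial : ℝ))⁻¹ * |s| ^ (n+3) *
          ‖(inner ℂ ψ ((H ^ (n+3)) ψ) : ℂ)‖ := hnorm
      _ ≤ (((n+3).factorial : ℝ))⁻¹ * |s| ^ (n+3) * ‖H‖ ^ (n+3) := by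
          gcongr
      _ ≤ ((6 * n.factorial : ℝ))⁻¹ * |s| ^ (n+3) * ‖H‖ ^ (n+3) := by
          gcongr
      _ = ‖H‖ ^ 3 / 6 * |s| ^ 3 * ((|s| * ‖H‖) ^ n / n.factorial) := by
          rw [pow_add, pow_add, mul_pow]
          have := (hfactpos n).ne'
          field_simp
  have hg : Summable (fun n : ℕ => (|s| * ‖H‖) ^ n / n.factorial) :=
    Real.summable_pow_div_factorial _
  have hgs : Summable (fun n : ℕ => ‖H‖ ^ 3 / 6 * |s| ^ 3 * ((|s| * ‖H‖) ^ n / n.factorial)) :=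
    hg.mul_left _
  have hns : Summable (fun n : ℕ => ‖u (n + 3)‖) :=
    Summable.of_nonneg_of_le (fun n => norm_nonneg _) hbound hgs
  have hexp : ∑' n : ℕ, (|s| * ‖H‖) ^ n / n.factorial = Real.exp (|s| * ‖H‖) := by
    rw [Real.exp_eq_exp_ℝ, NormedSpace.exp_eq_tsum_div]
  calc ‖∑' n : ℕ, u (n + 3)‖ ≤ ∑' n : ℕ, ‖u (n + 3)‖ := norm_tsum_le_tsum_norm hns
    _ ≤ ∑' n : ℕ, ‖H‖ ^ 3 / 6 * |s| ^ 3 * ((|s| * ‖H‖) ^ n / n.factorial) :=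
        Summable.tsum_le_tsum hbound hns hgs
    _ = ‖H‖ ^ 3 / 6 * |s| ^ 3 * Real.exp (|s| * ‖H‖) := by rw [tsum_mul_left, hexp]
    _ ≤ ‖H‖ ^ 3 * Real.exp (M * ‖H‖) / 6 * |s| ^ 3 := by
        have he : Real.exp (|s| * ‖H‖) ≤ Real.exp (M * ‖H‖) :=
          Real.exp_le_exp.2 (mul_le_mul_of_nonneg_right hs (norm_nonneg H))
        have h9 := mul_le_mul_of_nonneg_left he
          (show (0:ℝ) ≤ ‖H‖ ^ 3 / 6 * |s| ^ 3 by positivity)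
        nlinarith [h9]

theorem zeno_sq_est_aux (H : E →L[ℂ] E) (hH : IsSelfAdjoint H) (ψ : E) (hψ : ‖ψ‖ = 1)
    (σsq : ℝ) (hσ : σsq = ‖H ψ‖ ^ 2 - (Complex.re (inner ℂ ψ (H ψ) : ℂ)) ^ 2)
    (M : ℝ) (hM : 0 ≤ M) :
    ∃ C : ℝ, 0 ≤ C ∧ ∀ s : ℝ, |s| ≤ M →
      |‖(inner ℂ ψ (NormedSpace.exp (((-s : ℂ) * Complex.I) • H) ψ) : ℂ)‖ ^ 2 -
        (1 - σsq * s ^ 2)| ≤ C * |s| ^ 3 := by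
  set a : ℝ := Complex.re (inner ℂ ψ (H ψ) : ℂ) with haa
  set b : ℝ := ‖H ψ‖ ^ 2 with hbb
  have hb0 : 0 ≤ b := by positivity
  have h1 : (inner ℂ (H ψ) ψ : ℂ) = inner ℂ ψ (H ψ) := by
    rw [← ContinuousLinearMap.adjoint_inner_right H ψ ψ, hH.adjoint_eq]
  have ha : (inner ℂ ψ (H ψ) : ℂ) = (a : ℂ) := by
    have h2 : (starRingEnd ℂ) (inner ℂ ψ (H ψ) : ℂ) = inner ℂ ψ (H ψ) := by
      rw [inner_conj_symm]; exact h1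
    exact (Complex.conj_eq_iff_re.mp h2).symm
  have hb : (inner ℂ ψ ((H ^ 2) ψ) : ℂ) = (b : ℂ) := by
    have h2 : (H ^ 2) ψ = H (H ψ) := by rw [pow_two]; rfl
    rw [h2]
    nth_rewrite 1 [← hH.adjoint_eq]
    rw [ContinuousLinearMap.adjoint_inner_right, inner_self_eq_norm_sq_to_K, hbb]
    norm_cast
  set D : ℝ := ‖H‖ ^ 3 * Real.exp (M * ‖H‖) / 6 with hD
  have hD0 : 0 ≤ D := by positivity
  set Z : ℝ := 1 + M * |a| + M ^ 2 * b / 2 with hZ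
  have hZ0 : 0 ≤ Z := by positivity
  refine ⟨D * (1 + Z) + M * b ^ 2 / 4, by positivity, fun s hs => ?_⟩
  set f : ℂ := inner ℂ ψ (NormedSpace.exp (((-s : ℂ) * Complex.I) • H) ψ) with hf
  set z : ℂ := 1 - (s : ℂ) * Complex.I * (a : ℂ) - (s : ℂ) ^ 2 * (b : ℂ) / 2 with hz
  have hw : ‖f - z‖ ≤ D * |s| ^ 3 := by
    have := zeno_taylor_aux H ψ hψ M s hs
    rwa [ha, hb] at this
  have hf1 : ‖f‖ ≤ 1 := by
    calc ‖f‖ ≤ ‖ψ‖ * ‖NormedSpace.exp (((-s : ℂ) * Complex.I) • H) ψ‖ :=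
          norm_inner_le_norm _ _
      _ = 1 := by rw [zeno_norm_exp_aux H hH ψ s, hψ]; norm_num
  have hzsq : ‖z‖ ^ 2 = (1 - s ^ 2 * b / 2) ^ 2 + (s * a) ^ 2 := by
    have hze : z = ((1 - s ^ 2 * b / 2 : ℝ) : ℂ) + ((-(s * a) : ℝ) : ℂ) * Complex.I := by
      rw [hz]; push_cast; ring
    rw [hze, Complex.sq_norm, Complex.normSq_add_mul_I]
    ring
  have hsM : s ^ 2 ≤ M ^ 2 := by
    nlinarith [_root_.sq_abs s, abs_nonneg s, mul_self_le_mul_self (abs_nonneg s) hs]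
  have hz1 : ‖z‖ ≤ Z := by
    calc ‖z‖ ≤ ‖(1 : ℂ) - (s : ℂ) * Complex.I * (a : ℂ)‖ + ‖(s : ℂ) ^ 2 * (b : ℂ) / 2‖ :=
          norm_sub_le _ _
      _ ≤ ‖(1 : ℂ)‖ + ‖(s : ℂ) * Complex.I * (a : ℂ)‖ + ‖(s : ℂ) ^ 2 * (b : ℂ) / 2‖ := by
          have := norm_sub_le (1 : ℂ) ((s : ℂ) * Complex.I * (a : ℂ))
          linarith
      _ ≤ Z := by
          simp only [norm_one, norm_mul, norm_div, norm_pow,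
            Complex.norm_I, Complex.norm_real, Real.norm_eq_abs]
          rw [hZ]
          have h3 : |s| * 1 * |a| ≤ M * |a| :=
            by nlinarith [abs_nonneg a, abs_nonneg s]
          have h4 : |s| ^ 2 * |b| / ‖(2 : ℂ)‖ ≤ M ^ 2 * b / 2 := by
            have h2 : ‖(2 : ℂ)‖ = 2 := by norm_num
            rw [h2, _root_.abs_of_nonneg hb0, _root_.sq_abs]
            nlinarith
          linarith
  -- main estimate
  have habs : |‖f‖ - ‖z‖| ≤ ‖f - z‖ := abs_norm_sub_norm_le f z
  have h5 : |‖f‖ ^ 2 - ‖z‖ ^ 2| ≤ D * |s| ^ 3 * (1 + Z) := by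
    have e1 : ‖f‖ ^ 2 - ‖z‖ ^ 2 = (‖f‖ - ‖z‖) * (‖f‖ + ‖z‖) := by ring
    rw [e1, abs_mul]
    have e2 : |‖f‖ + ‖z‖| ≤ 1 + Z := by
      rw [_root_.abs_of_nonneg (by positivity)]; linarith
    have e3 : |‖f‖ - ‖z‖| ≤ D * |s| ^ 3 := le_trans habs hw
    have := mul_le_mul e3 e2 (abs_nonneg _) (by positivity)
    linarith
  have h6 : |‖z‖ ^ 2 - (1 - σsq * s ^ 2)| ≤ M * b ^ 2 / 4 * |s| ^ 3 := by
    have e1 : ‖z‖ ^ 2 - (1 - σsq * s ^ 2) = s ^ 4 * b ^ 2 / 4 := by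
      rw [hzsq, hσ]; ring
    rw [e1, _root_.abs_of_nonneg (by positivity : (0:ℝ) ≤ s ^ 4 * b ^ 2 / 4)]
    have e2 : s ^ 4 = |s| ^ 3 * |s| := by
      rw [← _root_.abs_of_nonneg (show (0:ℝ) ≤ s ^ 4 by positivity), ← pow_abs]
      ring
    rw [e2]
    have e3 := mul_le_mul_of_nonneg_right hs
      (show (0:ℝ) ≤ |s| ^ 3 * b ^ 2 / 4 by positivity)
    linarith [e3]
  calc |‖f‖ ^ 2 - (1 - σsq * s ^ 2)| ≤ |‖f‖ ^ 2 - ‖z‖ ^ 2| + |‖z‖ ^ 2 - (1 - σsq * s ^ 2)| := by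
        have := abs_sub_le (‖f‖ ^ 2) (‖z‖ ^ 2) (1 - σsq * s ^ 2)
        linarith
    _ ≤ D * |s| ^ 3 * (1 + Z) + M * b ^ 2 / 4 * |s| ^ 3 := add_le_add h5 h6
    _ = (D * (1 + Z) + M * b ^ 2 / 4) * |s| ^ 3 := by ring

theorem zeno_pow_diff (x y : ℝ) (hx0 : 0 ≤ x) (hx1 : x ≤ 1) (hy0 : 0 ≤ y) (hy1 : y ≤ 1) :
    ∀ n : ℕ, |x ^ n - y ^ n| ≤ n * |x - y| := by
  intro n
  induction n with
  | zero => simp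
  | succ n ih =>
    have key : x ^ (n + 1) - y ^ (n + 1) = x * (x ^ n - y ^ n) + y ^ n * (x - y) := by ring
    have h1 : x * |x ^ n - y ^ n| ≤ n * |x - y| := by
      calc x * |x ^ n - y ^ n| ≤ 1 * |x ^ n - y ^ n| :=
            mul_le_mul_of_nonneg_right hx1 (abs_nonneg _)
        _ = |x ^ n - y ^ n| := one_mul _
        _ ≤ n * |x - y| := ih
    have h2 : y ^ n * |x - y| ≤ |x - y| := by
      calc y ^ n * |x - y| ≤ 1 * |x - y| :=
            mul_le_mul_of_nonneg_right (pow_le_one₀ hy0 hy1) (abs_nonneg _)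
        _ = |x - y| := one_mul _
    calc |x ^ (n + 1) - y ^ (n + 1)| ≤ x * |x ^ n - y ^ n| + y ^ n * |x - y| := by
          rw [key]
          refine (abs_add_le _ _).trans ?_
          rw [abs_mul, abs_mul, _root_.abs_of_nonneg hx0,
            _root_.abs_of_nonneg (pow_nonneg hy0 n)]
        _ ≤ (n : ℝ) * |x - y| + |x - y| := by linarith
        _ = ((n + 1 : ℕ) : ℝ) * |x - y| := by push_cast; ring

end ZenoAux

/-- Critical exponent `α = 1/2`: `p_{N,1/2}(τ) = |⟨ψ, exp(-iτN^(-1/2)H)ψ⟩|^(2N)` converges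
to the Gaussian `exp(-σ²τ²)`, with `σ² = ‖Hψ‖² - ⟨ψ,Hψ⟩²`, uniformly on compacts. -/
theorem zeno_critical_exponent
    {E : Type*} [NormedAddCommGroup E] [InnerProductSpace ℂ E] [CompleteSpace E]
    (H : E →L[ℂ] E) (hH : IsSelfAdjoint H) (ψ : E) (hψ : ‖ψ‖ = 1)
    (σsq : ℝ) (hσ : σsq = ‖H ψ‖ ^ 2 - (Complex.re (inner ℂ ψ (H ψ) : ℂ)) ^ 2)
    (K : Set ℝ) (hK : IsCompact K) :
    TendstoUniformlyOn
      (fun (N : ℕ) (τ : ℝ) =>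
        ‖
            (inner ℂ ψ
              ((NormedSpace.exp
                  (((-(τ * (N : ℝ) ^ (-(1 : ℝ) / 2) : ℝ) : ℂ) * Complex.I) • H)) ψ) : ℂ)‖
          ^ (2 * N))
      (fun τ => Real.exp (-(σsq * τ ^ 2))) atTop K := by
  obtain ⟨M₀, hM₀⟩ := hK.isBounded.subset_closedBall 0
  set M : ℝ := max M₀ 1 with hM
  have hM1 : (1 : ℝ) ≤ M := le_max_right _ _
  have hM0 : (0 : ℝ) ≤ M := by linarith
  have hKM : ∀ τ ∈ K, |τ| ≤ M := by
    intro τ hτ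
    have := hM₀ hτ
    rw [Metric.mem_closedBall, Real.dist_eq, sub_zero] at this
    exact le_trans this (le_max_left _ _)
  have σ0 : 0 ≤ σsq := by
    have h1 : |Complex.re (inner ℂ ψ (H ψ) : ℂ)| ≤ ‖(inner ℂ ψ (H ψ) : ℂ)‖ :=
      Complex.abs_re_le_norm _
    have h2 : ‖(inner ℂ ψ (H ψ) : ℂ)‖ ≤ ‖ψ‖ * ‖H ψ‖ := norm_inner_le_norm _ _
    rw [hψ, one_mul] at h2
    rw [hσ]
    nlinarith [abs_nonneg (Complex.re (inner ℂ ψ (H ψ) : ℂ)), _root_.sq_abs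
      (Complex.re (inner ℂ ψ (H ψ) : ℂ))]
  obtain ⟨C, hC0, hC⟩ := zeno_sq_est_aux H hH ψ hψ σsq hσ M hM0
  rw [Metric.tendstoUniformlyOn_iff]
  intro ε hε
  -- eventual bounds
  have t1 : Tendsto (fun N : ℕ => ((N : ℝ) ^ (-(1 : ℝ) / 2))) atTop (nhds 0) := by
    have := (tendsto_rpow_neg_atTop (by norm_num : (0:ℝ) < 1/2)).comp
      (tendsto_natCast_atTop_atTop (R := ℝ))
    simpa [Function.comp_def, neg_div] using this
  have t2 : Tendsto (fun N : ℕ => (1 / (N : ℝ))) atTop (nhds 0) :=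
    tendsto_one_div_atTop_nhds_zero_nat
  have hten : Tendsto (fun N : ℕ => C * M ^ 3 * ((N : ℝ) ^ (-(1 : ℝ) / 2)) +
      (σsq * M ^ 2) ^ 2 * (1 / (N : ℝ))) atTop (nhds 0) := by
    have := (t1.const_mul (C * M ^ 3)).add (t2.const_mul ((σsq * M ^ 2) ^ 2))
    simpa using this
  have ev2 : ∀ᶠ N : ℕ in atTop, C * M ^ 3 * ((N : ℝ) ^ (-(1 : ℝ) / 2)) +
      (σsq * M ^ 2) ^ 2 * (1 / (N : ℝ)) < ε := hten.eventually (gt_mem_nhds hε)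
  have hten3 : Tendsto (fun N : ℕ => σsq * M ^ 2 * (1 / (N : ℝ))) atTop (nhds 0) := by
    simpa using t2.const_mul (σsq * M ^ 2)
  have ev3 : ∀ᶠ N : ℕ in atTop, σsq * M ^ 2 * (1 / (N : ℝ)) < 1 :=
    hten3.eventually (gt_mem_nhds one_pos)
  filter_upwards [eventually_ge_atTop 1, ev2, ev3] with N hN1 hb2 hb3
  intro τ hτ
  have hτM : |τ| ≤ M := hKM τ hτ
  have hτ2 : τ ^ 2 ≤ M ^ 2 := by
    nlinarith [_root_.sq_abs τ, mul_self_le_mul_self (abs_nonneg τ) hτM]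
  have hNpos : (0 : ℝ) < (N : ℝ) := by exact_mod_cast Nat.lt_of_lt_of_le Nat.zero_lt_one hN1
  have hN1' : (1 : ℝ) ≤ (N : ℝ) := by exact_mod_cast hN1
  set r : ℝ := (N : ℝ) ^ (-(1 : ℝ) / 2) with hrdef
  have hr0 : 0 ≤ r := Real.rpow_nonneg (le_of_lt hNpos) _
  have hr1 : r ≤ 1 :=
    Real.rpow_le_one_of_one_le_of_nonpos hN1' (by norm_num)
  have hr2 : r ^ 2 = ((N : ℝ))⁻¹ := by
    rw [hrdef, ← Real.rpow_natCast ((N : ℝ) ^ (-(1:ℝ)/2)) 2, ← Real.rpow_mul (le_of_lt hNpos)]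
    norm_num [Real.rpow_neg_one]
  set s : ℝ := τ * r with hsdef
  have hsM : |s| ≤ M := by
    rw [hsdef, abs_mul, _root_.abs_of_nonneg hr0]
    calc |τ| * r ≤ M * 1 := mul_le_mul hτM hr1 hr0 hM0
      _ = M := mul_one M
  -- abbreviations
  set f : ℂ := inner ℂ ψ (NormedSpace.exp (((-s : ℂ) * Complex.I) • H) ψ) with hfdef
  set x : ℝ := ‖f‖ ^ 2 with hxdef
  have hx0 : 0 ≤ x := by positivity
  have hx1 : x ≤ 1 := by
    have : ‖f‖ ≤ 1 := by
      calc ‖f‖ ≤ ‖ψ‖ * ‖NormedSpace.exp (((-s : ℂ) * Complex.I) • H) ψ‖ :=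
            norm_inner_le_norm _ _
        _ = 1 := by rw [zeno_norm_exp_aux H hH ψ s, hψ]; norm_num
    nlinarith [norm_nonneg f]
  set v : ℝ := σsq * τ ^ 2 * ((N : ℝ))⁻¹ with hvdef
  have hv0 : 0 ≤ v := by positivity
  have hv1 : v ≤ 1 := by
    have h4 : σsq * τ ^ 2 * ((N : ℝ))⁻¹ ≤ σsq * M ^ 2 * ((N : ℝ))⁻¹ := by
      have := mul_le_mul_of_nonneg_left hτ2 σ0
      exact mul_le_mul_of_nonneg_right this (by positivity)
    have h5 : σsq * M ^ 2 * ((N : ℝ))⁻¹ < 1 := by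
      rw [one_div] at hb3; exact hb3
    linarith
  set y : ℝ := Real.exp (-v) with hydef
  have hy0 : 0 ≤ y := le_of_lt (Real.exp_pos _)
  have hy1 : y ≤ 1 := Real.exp_le_one_iff.mpr (by linarith)
  clear_value r s f x v y
  have hsv : σsq * s ^ 2 = v := by rw [hsdef, mul_pow, hr2, hvdef]; ring
  have hxe : |x - (1 - v)| ≤ C * |s| ^ 3 := by
    have h6 := hC s hsM
    rw [← hfdef, ← hxdef, hsv] at h6
    exact h6
  have hye : |y - (1 - v)| ≤ v ^ 2 := by
    have h7 := Real.abs_exp_sub_one_sub_id_le (x := -v)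
      (by rw [abs_neg, _root_.abs_of_nonneg hv0]; exact hv1)
    have e7 : Real.exp (-v) - 1 - (-v) = y - (1 - v) := by rw [hydef]; ring
    rw [e7, neg_sq] at h7
    exact h7
  have hxy : |x - y| ≤ C * |s| ^ 3 + v ^ 2 := by
    have h8 := abs_sub_le x (1 - v) y
    have h9 : |(1 - v) - y| = |y - (1 - v)| := abs_sub_comm _ _
    linarith
  have hpow : |x ^ N - y ^ N| ≤ N * |x - y| := zeno_pow_diff x y hx0 hx1 hy0 hy1 N
  have hNr2 : (N : ℝ) * r ^ 2 = 1 := by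
    rw [hr2]; field_simp
  have hNr3 : (N : ℝ) * r ^ 3 = r := by
    calc (N : ℝ) * r ^ 3 = ((N : ℝ) * r ^ 2) * r := by ring
      _ = r := by rw [hNr2]; ring
  have habs3 : |s| ^ 3 = |τ| ^ 3 * r ^ 3 := by
    rw [hsdef, abs_mul, _root_.abs_of_nonneg hr0, mul_pow]
  have key1 : (N : ℝ) * (C * |s| ^ 3) ≤ C * M ^ 3 * r := by
    have e4 : (N : ℝ) * (C * |s| ^ 3) = C * |τ| ^ 3 * ((N : ℝ) * r ^ 3) := by
      rw [habs3]; ring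
    rw [e4, hNr3]
    exact mul_le_mul_of_nonneg_right
      (mul_le_mul_of_nonneg_left (pow_le_pow_left₀ (abs_nonneg τ) hτM 3) hC0) hr0
  have key2 : (N : ℝ) * v ^ 2 ≤ (σsq * M ^ 2) ^ 2 * (1 / (N : ℝ)) := by
    have e5 : (N : ℝ) * v ^ 2 = (σsq * τ ^ 2) ^ 2 * (1 / (N : ℝ)) := by
      rw [hvdef]; field_simp
    rw [e5]
    have h9 : (σsq * τ ^ 2) ^ 2 ≤ (σsq * M ^ 2) ^ 2 := by
      have h10 := mul_le_mul_of_nonneg_left hτ2 σ0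
      exact pow_le_pow_left₀ (mul_nonneg σ0 (sq_nonneg τ)) h10 2
    exact mul_le_mul_of_nonneg_right h9 (by positivity)
  have hfinal : |x ^ N - y ^ N| < ε := by
    have h10 : (N : ℝ) * |x - y| ≤ (N : ℝ) * (C * |s| ^ 3 + v ^ 2) :=
      mul_le_mul_of_nonneg_left hxy (le_of_lt hNpos)
    have h11 : (N : ℝ) * (C * |s| ^ 3 + v ^ 2) =
        (N : ℝ) * (C * |s| ^ 3) + (N : ℝ) * v ^ 2 := by ring
    linarith
  have hyN : y ^ N = Real.exp (-(σsq * τ ^ 2)) := by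
    rw [hydef, ← Real.exp_nat_mul]
    congr 1
    rw [hvdef]
    field_simp
  rw [Real.dist_eq, pow_mul, ← hxdef, ← hyN, abs_sub_comm]
  exact hfinal
end

section
/- Let 1/2 < α < 1 and let ψ be a unit vector in the domain of a self-adjoint operator H that is not an eigenvector of H. Then p_{N,α}(τ) = |⟨ψ, exp(-iτN^{α-1}H)ψ⟩|^{2N} converges to 0 as N → ∞, uniformly in τ on compact subsets of ℝ \ {0}. -/
open Filter

set_option maxHeartbeats 1000000

lemma exp_inner_tsum' {E : Type*} [NormedAddCommGroup E] [InnerProductSpace ℂ E] [CompleteSpace E]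
    (H : E →L[ℂ] E) (ψ : E) (c : ℂ) :
    (inner ℂ ψ (NormedSpace.exp (c • H) ψ) : ℂ)
      = ∑' n : ℕ, ((n.factorial : ℂ))⁻¹ * c ^ n * (inner ℂ ψ ((H ^ n) ψ) : ℂ) := by
  have hs := NormedSpace.expSeries_summable' (𝕂 := ℂ) (c • H)
  have h := ((innerSL ℂ ψ).comp (ContinuousLinearMap.apply ℂ E ψ)).map_tsum hs
  rw [NormedSpace.exp_eq_tsum ℂ]
  have hL : ∀ A : E →L[ℂ] E,
      ((innerSL ℂ ψ).comp (ContinuousLinearMap.apply ℂ E ψ)) A = (inner ℂ ψ (A ψ) : ℂ) := by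
    intro A; rfl
  rw [← hL, h]
  congr 1; ext n
  rw [hL]
  simp [smul_pow, inner_smul_right, mul_assoc]

lemma zeno_quad_bound {E : Type*} [NormedAddCommGroup E] [InnerProductSpace ℂ E] [CompleteSpace E]
    (H : E →L[ℂ] E) (hH : IsSelfAdjoint H) (ψ : E) (hψ : ‖ψ‖ = 1) :
    ∃ C : ℝ, 0 ≤ C ∧ ∀ θ : ℝ, |θ| ≤ 1 →
      (‖(inner ℂ ψ (NormedSpace.exp ((((-θ : ℝ) : ℂ) * Complex.I) • H) ψ) : ℂ)‖) ^ 2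
        ≤ 1 - (‖H ψ‖ ^ 2 - ((inner ℂ ψ (H ψ) : ℂ)).re ^ 2) * θ ^ 2 + C * |θ| ^ 3 := by
  haveI : Nontrivial E := by
    refine ⟨ψ, 0, fun h => ?_⟩
    rw [h, norm_zero] at hψ; exact one_ne_zero hψ.symm
  set m : ℝ := ((inner ℂ ψ (H ψ) : ℂ)).re with hm_def
  set s : ℝ := ‖H ψ‖ ^ 2 with hs_def
  have hadj : ∀ x y : E, (inner ℂ (H x) y : ℂ) = inner ℂ x (H y) := fun x y => by
    have := ContinuousLinearMap.adjoint_inner_left H y x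
    rwa [hH.adjoint_eq] at this
  have hψψ : (inner ℂ ψ ψ : ℂ) = 1 := by
    rw [inner_self_eq_norm_sq_to_K, hψ]; norm_num
  have hm : (inner ℂ ψ (H ψ) : ℂ) = (m : ℝ) := by
    have h1 : (starRingEnd ℂ) (inner ℂ ψ (H ψ) : ℂ) = inner ℂ ψ (H ψ) := by
      rw [inner_conj_symm, hadj]
    rw [Complex.conj_eq_iff_re] at h1
    exact h1.symm
  have hs2 : (inner ℂ ψ ((H ^ 2) ψ) : ℂ) = (s : ℝ) := by
    have h2 : (H ^ 2) ψ = H (H ψ) := by rw [pow_two]; rfl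
    rw [h2, ← hadj, inner_self_eq_norm_sq_to_K]
    norm_cast
  have hs0 : 0 ≤ s := by positivity
  set C₀ : ℝ := ‖H‖ ^ 3 / 6 * Real.exp ‖H‖ with hC₀_def
  have hC₀0 : 0 ≤ C₀ := by positivity
  set B : ℝ := 1 + |m| + s / 2 with hB_def
  have hB0 : 0 ≤ B := by positivity
  refine ⟨s ^ 2 / 4 + 2 * B * C₀ + C₀ ^ 2, by positivity, fun θ hθ => ?_⟩
  set c : ℂ := ((-θ : ℝ) : ℂ) * Complex.I with hc_def
  have habs_c : ‖c‖ = |θ| := by simp [hc_def]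
  set f : ℕ → ℂ := fun n => ((n.factorial : ℂ))⁻¹ * c ^ n * (inner ℂ ψ ((H ^ n) ψ) : ℂ) with hf_def
  have hbound : ∀ n, ‖f n‖ ≤ (|θ| * ‖H‖) ^ n / n.factorial := by
    intro n
    have h1 : ‖(inner ℂ ψ ((H ^ n) ψ) : ℂ)‖ ≤ ‖H‖ ^ n := by
      calc ‖(inner ℂ ψ ((H ^ n) ψ) : ℂ)‖ ≤ ‖ψ‖ * ‖(H ^ n) ψ‖ := norm_inner_le_norm _ _
        _ ≤ ‖ψ‖ * (‖H ^ n‖ * ‖ψ‖) := by gcongr; exact (H ^ n).le_opNorm ψ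
        _ = ‖H ^ n‖ := by rw [hψ]; ring
        _ ≤ ‖H‖ ^ n := norm_pow_le _ _
    have h2 : ‖c ^ n‖ = |θ| ^ n := by rw [norm_pow, habs_c]
    have h3 : ‖((n.factorial : ℂ))⁻¹‖ = ((n.factorial : ℝ))⁻¹ := by
      rw [norm_inv]; norm_cast
    calc ‖f n‖ = ‖((n.factorial : ℂ))⁻¹‖ * ‖c ^ n‖ * ‖(inner ℂ ψ ((H ^ n) ψ) : ℂ)‖ := by
          simp [hf_def, norm_mul]
      _ = (n.factorial : ℝ)⁻¹ * |θ| ^ n * ‖(inner ℂ ψ ((H ^ n) ψ) : ℂ)‖ := by rw [h2, h3]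
      _ ≤ (n.factorial : ℝ)⁻¹ * |θ| ^ n * ‖H‖ ^ n := by
          gcongr
      _ = (|θ| * ‖H‖) ^ n / n.factorial := by rw [mul_pow]; ring
  have hsum : Summable f :=
    Summable.of_norm_bounded (Real.summable_pow_div_factorial (|θ| * ‖H‖)) hbound
  have hnormsum : Summable fun n => ‖f n‖ :=
    Summable.of_nonneg_of_le (fun n => norm_nonneg _) hbound
      (Real.summable_pow_div_factorial (|θ| * ‖H‖))
  have hg : (inner ℂ ψ (NormedSpace.exp (c • H) ψ) : ℂ) = ∑' n, f n := exp_inner_tsum' H ψ c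
  have htail := Summable.sum_add_tsum_nat_add 3 hsum
  -- head computation
  have hc2 : c ^ 2 = ((-(θ ^ 2) : ℝ) : ℂ) := by
    rw [hc_def, mul_pow, Complex.I_sq]; push_cast; ring
  have hf0 : f 0 = 1 := by simp [hf_def, hψψ, hψ]
  have hf1 : f 1 = c * (m : ℝ) := by simp [hf_def, hm]
  have hf2 : f 2 = (2 : ℂ)⁻¹ * ((-(θ ^ 2) : ℝ) : ℂ) * (s : ℝ) := by
    rw [hf_def]; simp only [hc2, hs2]; norm_num [Nat.factorial]
  set Tre : ℝ := 1 - θ ^ 2 * s / 2 with hTre_def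
  set Tim : ℝ := -(θ * m) with hTim_def
  have hhead : ∑ i ∈ Finset.range 3, f i = ((Tre : ℝ) : ℂ) + ((Tim : ℝ) : ℂ) * Complex.I := by
    rw [Finset.sum_range_succ, Finset.sum_range_succ, Finset.sum_range_one, hf0, hf1, hf2,
      hc_def, hTre_def, hTim_def]
    push_cast
    ring
  -- tail bound
  have hexp : ∑' i : ℕ, ‖H‖ ^ i / (i.factorial : ℝ) = Real.exp ‖H‖ := by
    rw [Real.exp_eq_exp_ℝ, NormedSpace.exp_eq_tsum_div]
  have htermb : ∀ i : ℕ, ‖f (i + 3)‖ ≤ |θ| ^ 3 * (‖H‖ ^ 3 / 6) * (‖H‖ ^ i / i.factorial) := by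
    intro i
    have h1 := hbound (i + 3)
    have hfac : (6 : ℝ) * i.factorial ≤ ((i + 3).factorial : ℝ) := by
      have : 6 * i.factorial ≤ (i + 3).factorial := by
        have h1 : (i+3).factorial = (i+3) * ((i+2) * ((i+1) * i.factorial)) := rfl
        have h2 : 1 ≤ i + 1 := by omega
        have h3 : 2 ≤ i + 2 := by omega
        have h4 : 3 ≤ i + 3 := by omega
        calc 6 * i.factorial = 3 * (2 * (1 * i.factorial)) := by ring
          _ ≤ (i+3) * ((i+2) * ((i+1) * i.factorial)) := by
              gcongr
          _ = (i+3).factorial := h1.symm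
      exact_mod_cast this
    have hθp : |θ| ^ (i + 3) ≤ |θ| ^ 3 :=
      pow_le_pow_of_le_one (abs_nonneg θ) hθ (by omega)
    calc ‖f (i + 3)‖ ≤ (|θ| * ‖H‖) ^ (i + 3) / (i + 3).factorial := h1
      _ = |θ| ^ (i + 3) * ‖H‖ ^ (i + 3) / (i + 3).factorial := by rw [mul_pow]
      _ ≤ |θ| ^ 3 * ‖H‖ ^ (i + 3) / (6 * i.factorial) := by
          apply div_le_div₀ (by positivity) _ (by positivity) hfac
          gcongr
      _ = |θ| ^ 3 * (‖H‖ ^ 3 / 6) * (‖H‖ ^ i / i.factorial) := by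
          rw [pow_add]
          field_simp
  have hsummand : Summable fun i : ℕ => |θ| ^ 3 * (‖H‖ ^ 3 / 6) * (‖H‖ ^ i / i.factorial) :=
    (Real.summable_pow_div_factorial ‖H‖).mul_left _
  have hns3 : Summable fun i : ℕ => ‖f (i + 3)‖ := by
    exact (summable_nat_add_iff 3).2 hnormsum
  have htail_bound : ‖∑' i, f (i + 3)‖ ≤ C₀ * |θ| ^ 3 := by
    calc ‖∑' i, f (i + 3)‖ ≤ ∑' i, ‖f (i + 3)‖ :=
          norm_tsum_le_tsum_norm hns3
      _ ≤ ∑' i, |θ| ^ 3 * (‖H‖ ^ 3 / 6) * (‖H‖ ^ i / i.factorial) :=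
          by exact Summable.tsum_le_tsum (fun i => htermb i) hns3 hsummand
      _ = |θ| ^ 3 * (‖H‖ ^ 3 / 6) * Real.exp ‖H‖ := by rw [tsum_mul_left, hexp]
      _ = C₀ * |θ| ^ 3 := by rw [hC₀_def]; ring
  -- assemble
  set g : ℂ := (inner ℂ ψ (NormedSpace.exp (c • H) ψ) : ℂ) with hg_def
  have hg_split : g = (((Tre : ℝ) : ℂ) + ((Tim : ℝ) : ℂ) * Complex.I) + ∑' i, f (i + 3) := by
    rw [← hhead, htail]; exact hg
  have habsT : ‖((Tre : ℝ) : ℂ) + ((Tim : ℝ) : ℂ) * Complex.I‖ ^ 2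
      = Tre ^ 2 + Tim ^ 2 := by
    rw [Complex.sq_norm, Complex.normSq_add_mul_I]
  have habsT_le : ‖((Tre : ℝ) : ℂ) + ((Tim : ℝ) : ℂ) * Complex.I‖ ≤ B := by
    calc ‖((Tre : ℝ) : ℂ) + ((Tim : ℝ) : ℂ) * Complex.I‖
        ≤ ‖((Tre : ℝ) : ℂ)‖ + ‖((Tim : ℝ) : ℂ) * Complex.I‖ :=
          norm_add_le _ _
      _ = |Tre| + |Tim| := by simp
      _ ≤ (1 + θ ^ 2 * s / 2) + |θ| * |m| := by
          gcongr
          · rw [hTre_def]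
            calc |1 - θ ^ 2 * s / 2| ≤ |(1:ℝ)| + |θ ^ 2 * s / 2| := abs_sub _ _
              _ = 1 + θ ^ 2 * s / 2 := by
                  rw [abs_one, abs_of_nonneg (by positivity)]
          · rw [hTim_def, abs_neg, abs_mul]
      _ ≤ B := by
          rw [hB_def]
          have h1 : θ ^ 2 ≤ 1 := by
            rw [← sq_abs]; nlinarith [abs_nonneg θ]
          have h2 : |θ| * |m| ≤ |m| := by
            nlinarith [abs_nonneg m, abs_nonneg θ]
          nlinarith
  have habs_g : ‖g‖ ≤ ‖((Tre : ℝ) : ℂ) + ((Tim : ℝ) : ℂ) * Complex.I‖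
      + C₀ * |θ| ^ 3 := by
    rw [hg_split]
    calc ‖_‖ ≤ ‖((Tre : ℝ) : ℂ) + ((Tim : ℝ) : ℂ) * Complex.I‖
          + ‖∑' i, f (i + 3)‖ := norm_add_le _ _
      _ ≤ _ := by
          gcongr
  -- final inequality
  have hTsq : Tre ^ 2 + Tim ^ 2 = 1 - (s - m ^ 2) * θ ^ 2 + θ ^ 4 * s ^ 2 / 4 := by
    rw [hTre_def, hTim_def]; ring
  have hθ3 : (0:ℝ) ≤ |θ| ^ 3 := by positivity
  have hθ4 : θ ^ 4 ≤ |θ| ^ 3 := by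
    have : θ ^ 4 = |θ| ^ 4 := by rw [← abs_pow, abs_of_nonneg (by positivity)]
    rw [this]
    calc |θ| ^ 4 = |θ| ^ 3 * |θ| := by ring
      _ ≤ |θ| ^ 3 * 1 := by gcongr
      _ = |θ| ^ 3 := by ring
  have hθ6 : |θ| ^ 6 ≤ |θ| ^ 3 := pow_le_pow_of_le_one (abs_nonneg θ) hθ (by omega)
  have habsg0 : 0 ≤ ‖g‖ := norm_nonneg g
  have habsT0 : 0 ≤ ‖((Tre : ℝ) : ℂ) + ((Tim : ℝ) : ℂ) * Complex.I‖ :=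
    norm_nonneg _
  have key : ‖g‖ ^ 2 ≤ 1 - (s - m ^ 2) * θ ^ 2
      + (s ^ 2 / 4 + 2 * B * C₀ + C₀ ^ 2) * |θ| ^ 3 := by
    have h1 : ‖g‖ ^ 2
        ≤ (‖((Tre : ℝ) : ℂ) + ((Tim : ℝ) : ℂ) * Complex.I‖ + C₀ * |θ| ^ 3) ^ 2 := by
      apply pow_le_pow_left₀ habsg0 habs_g
    set A : ℝ := ‖((Tre : ℝ) : ℂ) + ((Tim : ℝ) : ℂ) * Complex.I‖ with hA_def
    have hA2 : A ^ 2 = 1 - (s - m ^ 2) * θ ^ 2 + θ ^ 4 * s ^ 2 / 4 := habsT.trans hTsq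
    have e1 : (A + C₀ * |θ| ^ 3) ^ 2 = A ^ 2 + 2 * A * (C₀ * |θ| ^ 3) + C₀ ^ 2 * |θ| ^ 6 := by
      have : (|θ| ^ 3) ^ 2 = |θ| ^ 6 := by ring
      nlinarith [this]
    have e2 : 2 * A * (C₀ * |θ| ^ 3) ≤ 2 * B * (C₀ * |θ| ^ 3) := by
      have h := mul_le_mul_of_nonneg_right habsT_le (mul_nonneg hC₀0 hθ3)
      nlinarith [h]
    have e4 : C₀ ^ 2 * |θ| ^ 6 ≤ C₀ ^ 2 * |θ| ^ 3 :=
      mul_le_mul_of_nonneg_left hθ6 (sq_nonneg C₀)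
    have e5 : θ ^ 4 * s ^ 2 / 4 ≤ |θ| ^ 3 * s ^ 2 / 4 := by
      have h := mul_le_mul_of_nonneg_right hθ4 (by positivity : (0:ℝ) ≤ s ^ 2 / 4)
      nlinarith [h]
    calc ‖g‖ ^ 2 ≤ (A + C₀ * |θ| ^ 3) ^ 2 := h1
      _ = A ^ 2 + 2 * A * (C₀ * |θ| ^ 3) + C₀ ^ 2 * |θ| ^ 6 := e1
      _ ≤ (1 - (s - m ^ 2) * θ ^ 2 + θ ^ 4 * s ^ 2 / 4) + 2 * B * (C₀ * |θ| ^ 3)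
            + C₀ ^ 2 * |θ| ^ 3 := add_le_add (add_le_add (le_of_eq hA2) e2) e4
      _ ≤ (1 - (s - m ^ 2) * θ ^ 2 + |θ| ^ 3 * s ^ 2 / 4) + 2 * B * (C₀ * |θ| ^ 3)
            + C₀ ^ 2 * |θ| ^ 3 := by linarith [e5]
      _ = 1 - (s - m ^ 2) * θ ^ 2 + (s ^ 2 / 4 + 2 * B * C₀ + C₀ ^ 2) * |θ| ^ 3 := by ring
  calc ‖g‖ ^ 2 ≤ 1 - (s - m ^ 2) * θ ^ 2
        + (s ^ 2 / 4 + 2 * B * C₀ + C₀ ^ 2) * |θ| ^ 3 := key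
    _ = 1 - (‖H ψ‖ ^ 2 - m ^ 2) * θ ^ 2 + (s ^ 2 / 4 + 2 * B * C₀ + C₀ ^ 2) * |θ| ^ 3 := by
        rw [hs_def]

/-- For `1/2 < α < 1` and `ψ` not an eigenvector of `H`, the product formula
`p_{N,α}(τ) = |⟨ψ, exp(-iτN^(α-1)H)ψ⟩|^(2N)` converges to `0` uniformly in `τ`
on compact subsets of `ℝ \ {0}`. -/
theorem zeno_supercritical_exponent
    {E : Type*} [NormedAddCommGroup E] [InnerProductSpace ℂ E] [CompleteSpace E]
    (H : E →L[ℂ] E) (hH : IsSelfAdjoint H) (ψ : E) (hψ : ‖ψ‖ = 1)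
    (hnoteig : ¬ ∃ c : ℂ, H ψ = c • ψ)
    (α : ℝ) (hα0 : 1 / 2 < α) (hα : α < 1)
    (K : Set ℝ) (hK : IsCompact K) (hK0 : K ⊆ {0}ᶜ) :
    TendstoUniformlyOn
      (fun (N : ℕ) (τ : ℝ) =>
        ‖(inner ℂ ψ
              ((NormedSpace.exp
                  (((-(τ * (N : ℝ) ^ (α - 1) : ℝ) : ℂ) * Complex.I) • H)) ψ) : ℂ)‖
          ^ (2 * N))
      (fun _ => (0 : ℝ)) atTop K := by
  classical
  rcases K.eq_empty_or_nonempty with rfl | hKne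
  · rw [Metric.tendstoUniformlyOn_iff]
    intro ε hε
    filter_upwards with N τ hτ
    exact absurd hτ (Set.notMem_empty τ)
  -- variance
  set m : ℝ := ((inner ℂ ψ (H ψ) : ℂ)).re with hm_def
  set v : ℝ := ‖H ψ‖ ^ 2 - m ^ 2 with hv_def
  have hadj : ∀ x y : E, (inner ℂ (H x) y : ℂ) = inner ℂ x (H y) := fun x y => by
    have := ContinuousLinearMap.adjoint_inner_left H y x
    rwa [hH.adjoint_eq] at this
  have hm : (inner ℂ ψ (H ψ) : ℂ) = (m : ℝ) := by
    have h1 : (starRingEnd ℂ) (inner ℂ ψ (H ψ) : ℂ) = inner ℂ ψ (H ψ) := by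
      rw [inner_conj_symm, hadj]
    rw [Complex.conj_eq_iff_re] at h1
    exact h1.symm
  have hv_pos : 0 < v := by
    have hne : H ψ - ((m : ℝ) : ℂ) • ψ ≠ 0 := by
      intro h
      exact hnoteig ⟨(m : ℝ), by rwa [sub_eq_zero] at h⟩
    have hval : ‖H ψ - ((m : ℝ) : ℂ) • ψ‖ ^ 2 = v := by
      rw [@norm_sub_sq ℂ]
      have h1 : (inner ℂ (H ψ) (((m : ℝ) : ℂ) • ψ) : ℂ) = ((m ^ 2 : ℝ) : ℂ) := by
        rw [inner_smul_right]
        have h2 : (inner ℂ (H ψ) ψ : ℂ) = (starRingEnd ℂ) (inner ℂ ψ (H ψ) : ℂ) :=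
          (inner_conj_symm _ _).symm
        rw [h2, hm]
        push_cast
        simp [pow_two]
      rw [h1]
      have h3 : ‖((m : ℝ) : ℂ) • ψ‖ = |m| := by
        rw [norm_smul, hψ]
        simp
      rw [h3]
      have : |m| ^ 2 = m ^ 2 := sq_abs m
      rw [this, hv_def]
      simp [← Complex.ofReal_pow]
      ring
    have : 0 < ‖H ψ - ((m : ℝ) : ℂ) • ψ‖ := norm_pos_iff.mpr hne
    nlinarith
  obtain ⟨C, hC0, hC⟩ := zeno_quad_bound H hH ψ hψ
  -- min and max of |·| on K
  obtain ⟨x₁, hx₁K, hx₁⟩ := hK.exists_isMinOn hKne (continuous_abs.continuousOn)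
  obtain ⟨x₂, hx₂K, hx₂⟩ := hK.exists_isMaxOn hKne (continuous_abs.continuousOn)
  set m0 : ℝ := |x₁| with hm0_def
  set M : ℝ := |x₂| with hM_def
  have hm0 : 0 < m0 := abs_pos.mpr (hK0 hx₁K)
  have hlow : ∀ τ ∈ K, m0 ≤ |τ| := fun τ hτ => isMinOn_iff.mp hx₁ τ hτ
  have hup : ∀ τ ∈ K, |τ| ≤ M := fun τ hτ => isMaxOn_iff.mp hx₂ τ hτ
  have hM0 : 0 ≤ M := le_trans (abs_nonneg x₁) (hup x₁ hx₁K)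
  -- choice of δ
  set δ : ℝ := min 1 (min (v / (2 * (C + 1))) (Real.sqrt (2 / v))) with hδ_def
  have hδ0 : 0 < δ := by
    have h1 : 0 < Real.sqrt (2 / v) := Real.sqrt_pos.mpr (by positivity)
    exact lt_min one_pos (lt_min (by positivity) h1)
  have hδ1 : δ ≤ 1 := min_le_left _ _
  have hδC : C * δ ≤ v / 2 := by
    have h1 : δ ≤ v / (2 * (C + 1)) := le_trans (min_le_right _ _) (min_le_left _ _)
    have h2 : C * δ ≤ C * (v / (2 * (C + 1))) :=
      mul_le_mul_of_nonneg_left h1 hC0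
    have h3 : C * (v / (2 * (C + 1))) ≤ v / 2 := by
      rw [show C * (v / (2 * (C + 1))) = C * v / (2 * (C + 1)) from (mul_div_assoc C v _).symm]
      rw [div_le_div_iff₀ (by positivity : (0:ℝ) < 2 * (C + 1)) (by norm_num : (0:ℝ) < 2)]
      nlinarith [hv_pos.le, hC0]
    linarith
  have hδsq : v * δ ^ 2 / 2 ≤ 1 := by
    have h1 : δ ≤ Real.sqrt (2 / v) := le_trans (min_le_right _ _) (min_le_right _ _)
    have h2 : δ ^ 2 ≤ 2 / v := by
      rw [← Real.sq_sqrt (by positivity : (0:ℝ) ≤ 2 / v)]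
      exact pow_le_pow_left₀ hδ0.le h1 2
    have h3 : v * δ ^ 2 ≤ v * (2 / v) := mul_le_mul_of_nonneg_left h2 hv_pos.le
    have h4 : v * (2 / v) = 2 := by field_simp
    linarith
  -- the dominating sequence
  set b : ℕ → ℝ := fun N => Real.exp (-(v * m0 ^ 2 / 2 * (N : ℝ) ^ (2 * α - 1))) with hb_def
  have hb0 : Tendsto b atTop (nhds 0) := by
    apply Real.tendsto_exp_atBot.comp
    have h1 : Tendsto (fun N : ℕ => ((N : ℝ)) ^ (2 * α - 1)) atTop atTop :=
      (tendsto_rpow_atTop (by linarith : (0:ℝ) < 2 * α - 1)).comp tendsto_natCast_atTop_atTop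
    have h2 : Tendsto (fun N : ℕ => v * m0 ^ 2 / 2 * ((N : ℝ)) ^ (2 * α - 1)) atTop atTop :=
      h1.const_mul_atTop (by positivity)
    exact tendsto_neg_atTop_atBot.comp h2
  -- eventual smallness of the time step
  have hsmall : ∀ᶠ N : ℕ in atTop, M * (N : ℝ) ^ (α - 1) ≤ δ := by
    have h1 : Tendsto (fun N : ℕ => M * (N : ℝ) ^ (α - 1)) atTop (nhds 0) := by
      rw [show (0:ℝ) = M * 0 by ring]
      apply Tendsto.const_mul
      have h2 := tendsto_rpow_neg_atTop (by linarith : (0:ℝ) < 1 - α)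
      have heq : (fun x : ℝ => x ^ (-(1 - α))) = fun x : ℝ => x ^ (α - 1) := by
        funext x; ring_nf
      rw [heq] at h2
      exact h2.comp tendsto_natCast_atTop_atTop
    filter_upwards [h1.eventually_lt_const hδ0] with N hN using hN.le
  rw [Metric.tendstoUniformlyOn_iff]
  intro ε hε
  filter_upwards [hsmall, hb0.eventually_lt_const hε, eventually_ge_atTop 1]
    with N hNδ hNb hN1 τ hτ
  have hNpos : (0:ℝ) < (N : ℝ) := by exact_mod_cast Nat.lt_of_lt_of_le Nat.zero_lt_one hN1
  set θ : ℝ := τ * (N : ℝ) ^ (α - 1) with hθ_def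
  have hrp : (0:ℝ) ≤ (N : ℝ) ^ (α - 1) := Real.rpow_nonneg hNpos.le _
  have habsθ : |θ| = |τ| * (N : ℝ) ^ (α - 1) := by
    rw [hθ_def, abs_mul, abs_of_nonneg hrp]
  have hθδ : |θ| ≤ δ := by
    rw [habsθ]
    calc |τ| * (N : ℝ) ^ (α - 1) ≤ M * (N : ℝ) ^ (α - 1) :=
          mul_le_mul_of_nonneg_right (hup τ hτ) hrp
      _ ≤ δ := hNδ
  have hθ1 : |θ| ≤ 1 := le_trans hθδ hδ1
  have hq := hC θ hθ1
  rw [← hm_def, ← hv_def] at hq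
  set q : ℝ := ‖
      (inner ℂ ψ (NormedSpace.exp ((((-θ : ℝ) : ℂ) * Complex.I) • H) ψ) : ℂ)‖ with hq_def
  have hq0 : 0 ≤ q := norm_nonneg _
  have h2a : C * |θ| ^ 3 ≤ v / 2 * θ ^ 2 := by
    have h1 : |θ| ^ 3 = |θ| * θ ^ 2 := by rw [← sq_abs]; ring
    rw [h1]
    calc C * (|θ| * θ ^ 2) = C * |θ| * θ ^ 2 := by ring
      _ ≤ C * δ * θ ^ 2 :=
          mul_le_mul_of_nonneg_right (mul_le_mul_of_nonneg_left hθδ hC0) (sq_nonneg θ)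
      _ ≤ v / 2 * θ ^ 2 := mul_le_mul_of_nonneg_right hδC (sq_nonneg θ)
  have hq2 : q ^ 2 ≤ 1 - v / 2 * θ ^ 2 := by nlinarith [hq, h2a]
  have hnn : 0 ≤ 1 - v / 2 * θ ^ 2 := by
    have h1 : θ ^ 2 ≤ δ ^ 2 := by
      rw [← sq_abs]; exact pow_le_pow_left₀ (abs_nonneg θ) hθδ 2
    nlinarith [hv_pos.le, hδsq]
  have hrpow : (N : ℝ) * ((N : ℝ) ^ (α - 1)) ^ 2 = (N : ℝ) ^ (2 * α - 1) := by
    have h1 : ((N : ℝ) ^ (α - 1)) ^ (2:ℕ) = (N : ℝ) ^ ((α - 1) * 2) := by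
      rw [← Real.rpow_natCast ((N : ℝ) ^ (α - 1)) 2, ← Real.rpow_mul hNpos.le]
      norm_num
    have h2 : (N : ℝ) * (N : ℝ) ^ ((α - 1) * 2) = (N : ℝ) ^ (1 + (α - 1) * 2) := by
      rw [Real.rpow_add hNpos, Real.rpow_one]
    rw [h1, h2]
    congr 1
    ring
  have hθ2low : m0 ^ 2 * ((N : ℝ) ^ (α - 1)) ^ 2 ≤ θ ^ 2 := by
    have h1 : θ ^ 2 = τ ^ 2 * ((N : ℝ) ^ (α - 1)) ^ 2 := by rw [hθ_def]; ring
    have h2 : m0 ^ 2 ≤ τ ^ 2 := by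
      have := hlow τ hτ
      nlinarith [hm0.le, abs_nonneg τ, sq_abs τ]
    rw [h1]
    exact mul_le_mul_of_nonneg_right h2 (sq_nonneg _)
  have key : q ^ (2 * N) ≤ b N := by
    calc q ^ (2 * N) = (q ^ 2) ^ N := by rw [← pow_mul]
      _ ≤ (1 - v / 2 * θ ^ 2) ^ N := pow_le_pow_left₀ (sq_nonneg q) hq2 N
      _ ≤ (Real.exp (-(v / 2 * θ ^ 2))) ^ N :=
          pow_le_pow_left₀ hnn (by linarith [Real.add_one_le_exp (-(v / 2 * θ ^ 2))]) N
      _ = Real.exp ((N : ℝ) * (-(v / 2 * θ ^ 2))) := by rw [Real.exp_nat_mul]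
      _ ≤ Real.exp (-(v * m0 ^ 2 / 2 * (N : ℝ) ^ (2 * α - 1))) := by
          apply Real.exp_le_exp.mpr
          have h1 : v * m0 ^ 2 / 2 * (N : ℝ) ^ (2 * α - 1) ≤ (N : ℝ) * (v / 2 * θ ^ 2) := by
            rw [← hrpow]
            have h2 := mul_le_mul_of_nonneg_left hθ2low
              (by positivity : (0:ℝ) ≤ v / 2 * (N : ℝ))
            nlinarith [h2]
          linarith [h1]
      _ = b N := rfl
  have hgoal : dist ((0:ℝ)) (q ^ (2 * N)) < ε := by
    rw [Real.dist_eq, zero_sub, abs_neg, abs_of_nonneg (pow_nonneg hq0 _)]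
    exact lt_of_le_of_lt key hNb
  rw [show -((θ:ℝ):ℂ) = (((-θ:ℝ)):ℂ) from (Complex.ofReal_neg θ).symm]
  exact hgoal
end

section
/- Let ψ be a unit vector in the absolutely continuous subspace of a self-adjoint operator H, and α > 1. Then p_{N,α}(τ) = |⟨ψ, exp(-iτN^{α-1}H)ψ⟩|^{2N} converges to 0 as N → ∞, uniformly in τ on compact subsets of ℝ \ {0}. -/
open Filter MeasureTheory Topology

private lemma zeno_RL (ρ : ℝ → ℝ) :
    Tendsto (fun t : ℝ => ∫ lam : ℝ, Complex.exp (-Complex.I * t * lam) * (ρ lam : ℂ))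
      (cocompact ℝ) (𝓝 0) := by
  have h := Real.tendsto_integral_exp_smul_cocompact (fun v : ℝ => (ρ v : ℂ))
  have hφ : Tendsto (fun t : ℝ => t * (2 * Real.pi)⁻¹) (cocompact ℝ) (cocompact ℝ) :=
    (Homeomorph.mulRight₀ ((2 * Real.pi)⁻¹) (by positivity)).toCocompactMap.cocompact_tendsto'
  have := h.comp hφ
  convert this using 2 with t
  refine integral_congr_ae (Eventually.of_forall fun v => ?_)
  simp only [Circle.smul_def, Real.fourierChar_apply]
  congr 1
  have hπ : (Real.pi : ℂ) ≠ 0 := by exact_mod_cast Real.pi_ne_zero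
  push_cast
  rw [Complex.exp_eq_exp_iff_exists_int]
  exact ⟨0, by push_cast; field_simp; ring⟩

/-- For `ψ` in the absolutely continuous subspace of `H` (spectral measure with `L¹` density
`ρ`) and `α > 1`, `p_{N,α}(τ) = |⟨ψ, exp(-iτN^(α-1)H)ψ⟩|^(2N)` converges to `0`
uniformly in `τ` on compact subsets of `ℝ \ {0}`. -/
theorem zeno_large_exponent_ac_uniform
    {E : Type*} [NormedAddCommGroup E] [InnerProductSpace ℂ E] [CompleteSpace E]
    (H : E →L[ℂ] E) (hH : IsSelfAdjoint H) (ψ : E) (hψ : ‖ψ‖ = 1)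
    (ρ : ℝ → ℝ) (hρ : Integrable ρ) (hρ0 : 0 ≤ ρ)
    (hac : ∀ t : ℝ,
      (inner ℂ ψ ((NormedSpace.exp (((-t : ℂ) * Complex.I) • H)) ψ) : ℂ)
        = ∫ lam : ℝ, Complex.exp (-Complex.I * t * lam) * (ρ lam : ℂ))
    (α : ℝ) (hα : 1 < α)
    (K : Set ℝ) (hK : IsCompact K) (hK0 : K ⊆ {0}ᶜ) :
    TendstoUniformlyOn
      (fun (N : ℕ) (τ : ℝ) =>
        ‖
            (inner ℂ ψ
              ((NormedSpace.exp
                  (((-(τ * (N : ℝ) ^ (α - 1) : ℝ) : ℂ) * Complex.I) • H)) ψ) : ℂ)‖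
          ^ (2 * N))
      (fun _ => (0 : ℝ)) atTop K := by
  set f : ℝ → ℂ := fun t => ∫ lam : ℝ, Complex.exp (-Complex.I * t * lam) * (ρ lam : ℂ) with hf
  have hRL : Tendsto f (cocompact ℝ) (𝓝 0) := zeno_RL ρ
  -- extract radius r beyond which |f t| ≤ 1/2
  have hsmall : ∀ᶠ t in cocompact ℝ, ‖f t‖ < 1 / 2 := by
    have := hRL.eventually (Metric.ball_mem_nhds (0 : ℂ) (by norm_num : (0:ℝ) < 1/2))
    filter_upwards [this] with t ht
    simpa [dist_eq_norm] using ht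
  obtain ⟨S, hScomp, hS⟩ := (hasBasis_cocompact.eventually_iff).1 hsmall
  obtain ⟨r, hr⟩ := hScomp.isBounded.subset_closedBall 0
  have hfar : ∀ t : ℝ, r < |t| → ‖f t‖ < 1 / 2 := by
    intro t ht
    refine hS fun hmem => ?_
    have := hr hmem
    simp [Metric.mem_closedBall, Real.dist_eq] at this
    linarith
  -- positive lower bound on |τ| over K
  obtain ⟨ε, hε, hεK⟩ : ∃ ε > 0, ∀ τ ∈ K, ε ≤ |τ| := by
    rcases K.eq_empty_or_nonempty with h | hne
    · exact ⟨1, one_pos, by simp [h]⟩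
    · obtain ⟨τ0, hτ0K, hmin⟩ := hK.exists_isMinOn hne (continuous_abs.continuousOn)
      have hτ0 : τ0 ≠ 0 := by simpa using hK0 hτ0K
      exact ⟨|τ0|, abs_pos.mpr hτ0, fun τ hτ => hmin hτ⟩
  have hαpos : 0 < α - 1 := by linarith
  have hpow : Tendsto (fun N : ℕ => ε * (N : ℝ) ^ (α - 1)) atTop atTop :=
    ((tendsto_rpow_atTop hαpos).comp tendsto_natCast_atTop_atTop).const_mul_atTop hε
  have h2 : Tendsto (fun N : ℕ => ((1 : ℝ) / 2) ^ (2 * N)) atTop (𝓝 0) :=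
    (tendsto_pow_atTop_nhds_zero_of_lt_one (by norm_num) (by norm_num)).comp
      (tendsto_atTop_mono (fun n => Nat.le_mul_of_pos_left n two_pos) tendsto_id)
  rw [Metric.tendstoUniformlyOn_iff]
  intro δ hδ
  filter_upwards [h2.eventually (gt_mem_nhds hδ),
    hpow.eventually_gt_atTop r] with N h2N hNr τ hτ
  have hNnn : (0:ℝ) ≤ (N : ℝ) ^ (α - 1) := Real.rpow_nonneg (Nat.cast_nonneg N) _
  have habs : r < |τ * (N : ℝ) ^ (α - 1)| := by
    rw [abs_mul, abs_of_nonneg hNnn]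
    calc r < ε * (N : ℝ) ^ (α - 1) := hNr
      _ ≤ |τ| * (N : ℝ) ^ (α - 1) := by
          apply mul_le_mul_of_nonneg_right (hεK τ hτ) hNnn
  have hkey : ‖f (τ * (N : ℝ) ^ (α - 1))‖ < 1 / 2 := hfar _ habs
  have hinner : (inner ℂ ψ ((NormedSpace.exp
      (((-(τ * (N : ℝ) ^ (α - 1) : ℝ) : ℂ) * Complex.I) • H)) ψ) : ℂ)
      = f (τ * (N : ℝ) ^ (α - 1)) := by
    rw [show ((-(τ * (N : ℝ) ^ (α - 1) : ℝ) : ℂ)) = -((τ * (N : ℝ) ^ (α - 1) : ℝ) : ℂ) by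
      push_cast; ring]
    exact hac _
  rw [Real.dist_eq, hinner]
  have hnn : (0:ℝ) ≤ ‖f (τ * (N : ℝ) ^ (α - 1))‖ ^ (2 * N) :=
    pow_nonneg (norm_nonneg _) _
  rw [zero_sub, abs_neg, abs_of_nonneg hnn]
  calc ‖f (τ * (N : ℝ) ^ (α - 1))‖ ^ (2 * N)
      ≤ ((1:ℝ)/2) ^ (2 * N) :=
        pow_le_pow_left₀ (norm_nonneg _) hkey.le _
    _ < δ := h2N
end

section
/- Suppose p(τ₀) = |⟨ψ, exp(-iτ₀H)ψ⟩|² = 1 for some τ₀ ≠ 0, and let α > 1 be rational. Then for every integer M, limsup_{N→∞} p_{N,α}(Mτ₀) = 1, where p_{N,α}(τ) = p(τN^{α-1})^N. -/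
open Filter

/-- If `p(τ₀) = 1` for some `τ₀ ≠ 0` and `α > 1` is rational, then for every integer `M`
the limsup of `p_{N,α}(Mτ₀) = p(Mτ₀·N^(α-1))^N` equals `1`. -/
theorem zeno_limsup_one_of_rational_exponent
    {E : Type*} [NormedAddCommGroup E] [InnerProductSpace ℂ E] [CompleteSpace E]
    (H : E →L[ℂ] E) (hH : IsSelfAdjoint H) (ψ : E) (hψ : ‖ψ‖ = 1)
    (p : ℝ → ℝ)
    (hp : ∀ τ : ℝ, p τ =
      ‖(inner ℂ ψ ((NormedSpace.exp (((-τ : ℂ) * Complex.I) • H)) ψ) : ℂ)‖ ^ 2)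
    (τ₀ : ℝ) (hτ₀ : τ₀ ≠ 0) (hret : p τ₀ = 1)
    (α : ℝ) (hα : 1 < α) (hαQ : ∃ q : ℚ, (q : ℝ) = α)
    (M : ℤ) :
    Filter.limsup (fun N : ℕ => p ((M : ℝ) * τ₀ * (N : ℝ) ^ (α - 1)) ^ N) atTop = 1 := by
  classical
  letI : NormedAlgebra ℚ (E →L[ℂ] E) := .restrictScalars ℚ ℂ (E →L[ℂ] E)
  set U : ℝ → (E →L[ℂ] E) := fun τ => NormedSpace.exp (((-τ : ℂ) * Complex.I) • H) with hU
  -- star of U τ is U (-τ)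
  have hstar : ∀ τ : ℝ, star (U τ) = U (-τ) := by
    intro τ
    rw [hU]
    simp only
    rw [NormedSpace.star_exp, star_smul, hH.star_eq]
    congr 1
    simp [Complex.star_def, map_mul, Complex.conj_I]
  -- U (-τ) * U τ = 1
  have hcomm : ∀ σ τ : ℝ, Commute (((-σ : ℂ) * Complex.I) • H) (((-τ : ℂ) * Complex.I) • H) :=
    fun σ τ => ((Commute.refl H).smul_left _).smul_right _
  have hUmul : ∀ σ τ : ℝ, U σ * U τ = U (σ + τ) := by
    intro σ τ
    rw [hU]
    simp only
    rw [← NormedSpace.exp_add_of_commute (hcomm σ τ)]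
    congr 1
    rw [← add_smul]
    congr 1
    push_cast
    ring
  have hUinv : ∀ τ : ℝ, U (-τ) * U τ = 1 := by
    intro τ
    rw [hUmul, neg_add_cancel]
    rw [hU]
    simp only [Complex.ofReal_zero, neg_zero, zero_mul, zero_smul]
    exact NormedSpace.exp_zero
  -- U τ is an isometry on ψ
  have hUnorm : ∀ τ : ℝ, ‖U τ ψ‖ = ‖ψ‖ := by
    intro τ
    have h1 : (inner ℂ (U τ ψ) (U τ ψ) : ℂ) = inner ℂ ψ ψ := by
      have := hstar τ
      calc (inner ℂ (U τ ψ) (U τ ψ) : ℂ) = inner ℂ ψ ((ContinuousLinearMap.adjoint (U τ)) (U τ ψ)) := by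
            rw [ContinuousLinearMap.adjoint_inner_right]
        _ = inner ℂ ψ ((U (-τ) * U τ) ψ) := by
            rw [← ContinuousLinearMap.star_eq_adjoint, hstar τ]
            rfl
        _ = inner ℂ ψ ψ := by rw [hUinv τ]; rfl
    have h3 : ‖U τ ψ‖ ^ 2 = ‖ψ‖ ^ 2 := by
      rw [← inner_self_eq_norm_sq (𝕜 := ℂ), ← inner_self_eq_norm_sq (𝕜 := ℂ), h1]
    nlinarith [norm_nonneg (U τ ψ), norm_nonneg ψ]
  -- p is between 0 and 1
  have hpnn : ∀ τ : ℝ, 0 ≤ p τ := fun τ => by rw [hp τ]; positivity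
  have hple : ∀ τ : ℝ, p τ ≤ 1 := by
    intro τ
    rw [hp τ]
    have h1 : ‖(inner ℂ ψ (U τ ψ) : ℂ)‖ ≤ 1 := by
      have := norm_inner_le_norm (𝕜 := ℂ) ψ (U τ ψ)
      rw [hUnorm τ, hψ] at this
      simpa using this
    have h0 : 0 ≤ ‖(inner ℂ ψ (U τ ψ) : ℂ)‖ := norm_nonneg _
    nlinarith
  -- the eigenvalue
  set c : ℂ := inner ℂ ψ (U τ₀ ψ) with hc
  have hcabs : ‖c‖ = 1 := by
    have := hret
    rw [hp τ₀] at this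
    have h0 : 0 ≤ ‖c‖ := norm_nonneg _
    nlinarith [this]
  have hcne : c ≠ 0 := by
    intro h; rw [h] at hcabs; simp at hcabs
  -- U τ₀ ψ = c • ψ
  have heig : U τ₀ ψ = c • ψ := by
    have hφ : ‖c⁻¹ • U τ₀ ψ‖ = 1 := by
      rw [norm_smul, hUnorm τ₀, hψ, norm_inv, hcabs]
      simp
    have hin : (inner ℂ ψ (c⁻¹ • U τ₀ ψ) : ℂ) = 1 := by
      rw [inner_smul_right, ← hc, inv_mul_cancel₀ hcne]
    have h := (inner_eq_one_iff_of_norm_eq_one hψ hφ).mp hin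
    calc U τ₀ ψ = (c * c⁻¹) • U τ₀ ψ := by rw [mul_inv_cancel₀ hcne, one_smul]
      _ = c • (c⁻¹ • U τ₀ ψ) := by rw [smul_smul]
      _ = c • ψ := by rw [← h]
  -- U of natural multiples
  have hUn : ∀ n : ℕ, U (n * τ₀) = (U τ₀) ^ n := by
    intro n
    rw [hU]
    simp only
    rw [← NormedSpace.exp_nsmul]
    congr 1
    rw [← Nat.cast_smul_eq_nsmul ℂ, smul_smul]
    congr 1
    push_cast
    ring
  have heign : ∀ n : ℕ, ((U τ₀) ^ n) ψ = c ^ n • ψ := by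
    intro n
    induction n with
    | zero => simp
    | succ k ih =>
      rw [pow_succ, pow_succ]
      calc ((U τ₀) ^ k * U τ₀) ψ = ((U τ₀) ^ k) (U τ₀ ψ) := by
            rw [ContinuousLinearMap.mul_apply]
        _ = ((U τ₀) ^ k) (c • ψ) := by rw [heig]
        _ = c • (((U τ₀) ^ k) ψ) := by rw [map_smul]
        _ = c • (c ^ k • ψ) := by rw [ih]
        _ = (c ^ k * c) • ψ := by rw [smul_smul]; ring_nf
  have hpnat : ∀ n : ℕ, p (n * τ₀) = 1 := by
    intro n
    rw [hp]
    have : (inner ℂ ψ (U (n * τ₀) ψ) : ℂ) = c ^ n * (inner ℂ ψ ψ) := by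
      rw [hUn n, heign n, inner_smul_right]
    rw [hU] at this
    rw [this]
    simp [map_mul, map_pow, hcabs, inner_self_eq_norm_sq_to_K, hψ]
  -- p is even
  have hpeven : ∀ τ : ℝ, p (-τ) = p τ := by
    intro τ
    rw [hp, hp]
    have h1 : U (-τ) ψ = (ContinuousLinearMap.adjoint (U τ)) ψ := by
      rw [← ContinuousLinearMap.star_eq_adjoint, hstar τ]
    have h2 : (inner ℂ ψ (U (-τ) ψ) : ℂ) = starRingEnd ℂ (inner ℂ ψ (U τ ψ)) := by
      rw [h1, ContinuousLinearMap.adjoint_inner_right, ← inner_conj_symm]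
    rw [hU] at h2
    push_cast at h2 ⊢
    rw [h2, Complex.norm_conj]
  -- p of integer multiples
  have hpint : ∀ k : ℤ, p (k * τ₀) = 1 := by
    intro k
    rcases Int.natAbs_eq k with h | h
    · rw [h, Int.cast_natCast]; exact hpnat k.natAbs
    · rw [h, Int.cast_neg, Int.cast_natCast,
        show -(k.natAbs : ℝ) * τ₀ = -((k.natAbs : ℝ) * τ₀) by ring, hpeven]
      exact hpnat k.natAbs
  -- rationality setup
  obtain ⟨q, hq⟩ := hαQ
  have hq1 : 1 < q := by
    rw [show (1 : ℚ) = ((1 : ℚ)) from rfl]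
    have : ((1 : ℚ) : ℝ) < (q : ℝ) := by rw [hq]; exact_mod_cast hα
    exact_mod_cast this
  set r : ℚ := q - 1 with hr
  have hrpos : 0 < r := by simp [hr]; linarith
  set a : ℕ := r.num.toNat with ha
  set b : ℕ := r.den with hb
  have hbpos : 0 < b := r.pos
  have hanum : (r.num : ℚ) = (a : ℚ) := by
    rw [ha]
    have : 0 < r.num := Rat.num_pos.mpr hrpos
    exact_mod_cast (Int.toNat_of_nonneg this.le).symm
  have hrval : (r : ℝ) = (a : ℝ) / (b : ℝ) := by
    have := Rat.num_div_den r
    rw [hanum] at this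
    rw [← this]
    push_cast
    ring
  have hαr : α - 1 = (r : ℝ) := by
    rw [hr]; push_cast; rw [hq]
  -- the key computation along the subsequence m^b
  have hkey : ∀ m : ℕ, 0 < m → p ((M : ℝ) * τ₀ * ((m ^ b : ℕ) : ℝ) ^ (α - 1)) = 1 := by
    intro m hm
    have hmr : (0 : ℝ) < (m : ℝ) := by exact_mod_cast hm
    have hcalc : ((m ^ b : ℕ) : ℝ) ^ (α - 1) = ((m ^ a : ℕ) : ℝ) := by
      push_cast
      rw [← Real.rpow_natCast (m : ℝ) b, ← Real.rpow_natCast (m : ℝ) a,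
        ← Real.rpow_mul hmr.le]
      congr 1
      rw [hαr, hrval]
      field_simp
    rw [hcalc]
    have : (M : ℝ) * τ₀ * ((m ^ a : ℕ) : ℝ) = ((M * (m ^ a : ℕ) : ℤ) : ℝ) * τ₀ := by
      push_cast; ring
    rw [this]
    exact hpint _
  -- bounds for limsup
  set f : ℕ → ℝ := fun N => p ((M : ℝ) * τ₀ * (N : ℝ) ^ (α - 1)) ^ N with hf
  have hfle : ∀ N : ℕ, f N ≤ 1 := by
    intro N
    exact pow_le_one₀ (hpnn _) (hple _)
  have hfreq : ∃ᶠ N in atTop, (1 : ℝ) ≤ f N := by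
    rw [frequently_atTop]
    intro N₀
    refine ⟨(max N₀ 1) ^ b, ?_, ?_⟩
    · calc N₀ ≤ max N₀ 1 := le_max_left _ _
        _ ≤ (max N₀ 1) ^ b := Nat.le_self_pow hbpos.ne' _
    · rw [hf]
      simp only
      rw [hkey (max N₀ 1) (lt_of_lt_of_le one_pos (le_max_right _ _)), one_pow]
  refine le_antisymm ?_ ?_
  · exact Filter.limsup_le_of_le (Filter.IsCoboundedUnder.of_frequently_ge hfreq)
      (Filter.Eventually.of_forall hfle)
  · exact Filter.le_limsup_of_frequently_le hfreq
      (Filter.isBoundedUnder_of ⟨1, hfle⟩)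
end

section
/- Let μ be a Borel probability measure on ℝ with ∫λ² dμ(λ) < ∞, mean m = ∫λ dμ and variance σ² > 0. Then |μ̂(t/√N)|^{2N} → exp(-σ²t²) as N → ∞ for every t ∈ ℝ, where μ̂(t) = ∫exp(-itλ)dμ(λ). -/
open MeasureTheory Filter

lemma abs_sin_sub_le_sq (u : ℝ) : |Real.sin u - u| ≤ u ^ 2 := by
  have key : ∀ v : ℝ, 0 ≤ v → |Real.sin v - v| ≤ v ^ 2 := by
    intro v hv
    rw [abs_sub_comm, abs_of_nonneg (by linarith [Real.sin_le hv])]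
    rcases le_or_gt v 1 with h1 | h1
    · rcases eq_or_lt_of_le hv with h0 | h0
      · simp [← h0]
      · have := Real.sin_gt_sub_cube h0
        nlinarith
    · rcases le_or_gt v 2 with h2 | h2
      · have hs : 0 ≤ Real.sin v :=
          Real.sin_nonneg_of_nonneg_of_le_pi (by linarith) (by linarith [Real.pi_gt_three])
        nlinarith
      · have := Real.neg_one_le_sin v
        nlinarith
  rcases le_total 0 u with hu | hu
  · exact key u hu
  · have h2 : |Real.sin u - u| ≤ (-u) ^ 2 := by
      rw [← abs_neg]
      convert key (-u) (by linarith) using 2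
      rw [Real.sin_neg]; ring
    simpa using h2

lemma abs_log_one_add_sub {x : ℝ} (hx : |x| ≤ 1 / 2) :
    |Real.log (1 + x) - x| ≤ 2 * x ^ 2 := by
  obtain ⟨hl, hr⟩ := abs_le.1 hx
  have h1 : (0 : ℝ) < 1 + x := by linarith
  have h2 : Real.log (1 + x) ≤ x := by
    have := Real.log_le_sub_one_of_pos h1; linarith
  have h3 : 1 - (1 + x)⁻¹ ≤ Real.log (1 + x) := by
    have := Real.log_le_sub_one_of_pos (inv_pos.2 h1)
    rw [Real.log_inv] at this; linarith
  have hinv : (1 + x) * (1 + x)⁻¹ = 1 := mul_inv_cancel₀ h1.ne'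
  have h4 : x - 2 * x ^ 2 ≤ 1 - (1 + x)⁻¹ := by nlinarith [inv_pos.2 h1, sq_nonneg x]
  rw [abs_le]
  constructor <;> nlinarith [sq_nonneg x]

lemma tendsto_one_add_div_pow' {c : ℕ → ℝ} {l : ℝ} (h : Tendsto c atTop (nhds l)) :
    Tendsto (fun N : ℕ => (1 + c N / N) ^ N) atTop (nhds (Real.exp l)) := by
  have hx : Tendsto (fun N : ℕ => c N / N) atTop (nhds 0) :=
    h.div_atTop tendsto_natCast_atTop_atTop
  have hx' : Tendsto (fun N : ℕ => |c N / N|) atTop (nhds 0) := by simpa using hx.abs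
  have hev : ∀ᶠ N in atTop, |c N / (N : ℝ)| < 1 / 2 :=
    hx'.eventually_lt_const (by norm_num)
  have hlog : Tendsto (fun N : ℕ => (N : ℝ) * Real.log (1 + c N / N)) atTop (nhds l) := by
    have herr :
        Tendsto (fun N : ℕ => (N : ℝ) * Real.log (1 + c N / N) - c N) atTop (nhds 0) := by
      apply squeeze_zero_norm' (a := fun N : ℕ => 2 * c N ^ 2 / N)
      · filter_upwards [hev, eventually_gt_atTop 0] with N h12 hN
        have hN0 : (0 : ℝ) < N := by exact_mod_cast hN
        have hb := abs_log_one_add_sub (x := c N / N) h12.le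
        have hcn : c N = (N : ℝ) * (c N / N) := by field_simp
        calc ‖(N : ℝ) * Real.log (1 + c N / N) - c N‖
            = (N : ℝ) * |Real.log (1 + c N / N) - c N / N| := by
              rw [Real.norm_eq_abs]
              nth_rewrite 2 [hcn]
              rw [← mul_sub, abs_mul, abs_of_pos hN0]
          _ ≤ (N : ℝ) * (2 * (c N / N) ^ 2) := by
              exact mul_le_mul_of_nonneg_left hb hN0.le
          _ = 2 * c N ^ 2 / N := by field_simp
      · have := ((h.pow 2).const_mul 2).div_atTop tendsto_natCast_atTop_atTop
        simpa using this
    have := herr.add h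
    simpa using this
  have hev2 :
      (fun N : ℕ => Real.exp ((N : ℝ) * Real.log (1 + c N / N))) =ᶠ[atTop]
        fun N : ℕ => (1 + c N / N) ^ N := by
    filter_upwards [hev] with N hN
    have hpos : (0 : ℝ) < 1 + c N / N := by
      have := abs_lt.1 hN; linarith [this.1]
    rw [Real.exp_nat_mul, Real.exp_log hpos]
  exact (((Real.continuous_exp.tendsto l).comp hlog).congr' hev2)

lemma fourier_sq_tendsto (μ : Measure ℝ) [IsProbabilityMeasure μ]
    (hmom : Integrable (fun lam : ℝ => lam ^ 2) μ) (m : ℝ) (hm : m = ∫ lam : ℝ, lam ∂μ) :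
    Tendsto
      (fun s : ℝ =>
        (‖∫ lam : ℝ, Complex.exp (-Complex.I * s * lam) ∂μ‖ ^ 2 - 1) / s ^ 2)
      (nhdsWithin 0 {0}ᶜ) (nhds (m ^ 2 - ∫ lam : ℝ, lam ^ 2 ∂μ)) := by
  -- integrabilities
  have hIntId : Integrable (fun x : ℝ => x) μ := by
    refine ((integrable_const 1).add hmom).mono' aestronglyMeasurable_id (ae_of_all _ fun x => ?_)
    have : |x| ≤ 1 + x ^ 2 := by nlinarith [sq_nonneg (|x| - 1), sq_abs x]
    simpa using this
  have hIntcos : ∀ s : ℝ, Integrable (fun x : ℝ => Real.cos (s * x)) μ := fun s =>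
    (integrable_const 1).mono'
      ((Real.continuous_cos.comp (continuous_const.mul continuous_id)).aestronglyMeasurable)
      (ae_of_all _ fun x => by simpa using Real.abs_cos_le_one (s * x))
  have hIntsin : ∀ s : ℝ, Integrable (fun x : ℝ => Real.sin (s * x)) μ := fun s =>
    (integrable_const 1).mono'
      ((Real.continuous_sin.comp (continuous_const.mul continuous_id)).aestronglyMeasurable)
      (ae_of_all _ fun x => by simpa using Real.abs_sin_le_one (s * x))
  have hkey : ∀ (s x : ℝ), -Complex.I * s * x = ((-(s * x) : ℝ) : ℂ) * Complex.I := by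
    intro s x; push_cast; ring
  have hIntexp : ∀ s : ℝ, Integrable (fun x : ℝ => Complex.exp (-Complex.I * s * x)) μ := by
    intro s
    refine (integrable_const 1).mono' (Continuous.aestronglyMeasurable ?_)
      (ae_of_all _ fun x => ?_)
    · exact Complex.continuous_exp.comp (by continuity)
    · rw [hkey s x, Complex.norm_exp_ofReal_mul_I]
  -- absolute value squared
  have habs : ∀ s : ℝ,
      ‖∫ lam : ℝ, Complex.exp (-Complex.I * s * lam) ∂μ‖ ^ 2 =
        (∫ x : ℝ, Real.cos (s * x) ∂μ) ^ 2 + (∫ x : ℝ, Real.sin (s * x) ∂μ) ^ 2 := by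
    intro s
    rw [Complex.sq_norm, Complex.normSq_apply]
    have hre : (∫ lam : ℝ, Complex.exp (-Complex.I * s * lam) ∂μ).re
        = ∫ x : ℝ, Real.cos (s * x) ∂μ := by
      rw [← RCLike.re_to_complex, ← integral_re (hIntexp s)]
      refine integral_congr_ae (ae_of_all _ fun x => ?_)
      simp only [RCLike.re_to_complex]
      rw [hkey s x, Complex.exp_ofReal_mul_I_re, Real.cos_neg]
    have him : (∫ lam : ℝ, Complex.exp (-Complex.I * s * lam) ∂μ).im
        = -∫ x : ℝ, Real.sin (s * x) ∂μ := by
      rw [← integral_neg, ← RCLike.im_to_complex, ← integral_im (hIntexp s)]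
      refine integral_congr_ae (ae_of_all _ fun x => ?_)
      simp only [RCLike.im_to_complex]
      rw [hkey s x, Complex.exp_ofReal_mul_I_im, Real.sin_neg]
    rw [hre, him]; ring
  -- decomposition of cos and sin integrals
  have hcos_eq : ∀ s : ℝ, s ≠ 0 →
      ∫ x : ℝ, Real.cos (s * x) ∂μ
        = 1 - s ^ 2 * ∫ x : ℝ, (1 - Real.cos (s * x)) / s ^ 2 ∂μ := by
    intro s hs
    rw [integral_div, integral_sub (integrable_const 1) (hIntcos s), integral_const]
    simp only [probReal_univ, smul_eq_mul, one_mul]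
    field_simp
    ring
  have hsin_eq : ∀ s : ℝ, s ≠ 0 →
      ∫ x : ℝ, Real.sin (s * x) ∂μ
        = s * m + s ^ 2 * ∫ x : ℝ, (Real.sin (s * x) - s * x) / s ^ 2 ∂μ := by
    intro s hs
    rw [integral_div, integral_sub (hIntsin s) (hIntId.const_mul s), integral_const_mul, ← hm]
    field_simp
    ring
  -- limit of a
  have hs_ne : ∀ᶠ s in nhdsWithin (0:ℝ) {0}ᶜ, s ≠ 0 := by
    filter_upwards [self_mem_nhdsWithin] with s hs using hs
  have hsmall : ∀ x : ℝ, ∀ᶠ s in nhdsWithin (0:ℝ) {0}ᶜ, |s * x| ≤ 1 := by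
    intro x
    have hδ : (0:ℝ) < 1 / (|x| + 1) := by positivity
    have h1 : ∀ᶠ s in nhds (0:ℝ), |s| < 1 / (|x| + 1) := by
      filter_upwards [Metric.ball_mem_nhds (0:ℝ) hδ] with s hs
      simpa [Real.dist_eq] using hs
    filter_upwards [h1.filter_mono nhdsWithin_le_nhds] with s hs
    rw [abs_mul]
    calc |s| * |x| ≤ 1 / (|x| + 1) * |x| :=
          mul_le_mul_of_nonneg_right hs.le (abs_nonneg x)
      _ ≤ 1 := by
          rw [div_mul_eq_mul_div, div_le_one (by positivity)]
          nlinarith [abs_nonneg x]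
  have hzero : Tendsto (fun s : ℝ => s) (nhdsWithin (0:ℝ) {0}ᶜ) (nhds 0) :=
    tendsto_id.mono_left nhdsWithin_le_nhds
  have ha : Tendsto (fun s : ℝ => ∫ x : ℝ, (1 - Real.cos (s * x)) / s ^ 2 ∂μ)
      (nhdsWithin (0:ℝ) {0}ᶜ) (nhds (∫ x : ℝ, x ^ 2 / 2 ∂μ)) := by
    refine tendsto_integral_filter_of_dominated_convergence (fun x : ℝ => x ^ 2 / 2)
      (Eventually.of_forall fun s =>
        ((continuous_const.sub
          (Real.continuous_cos.comp (continuous_const.mul continuous_id))).div_const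
            _).aestronglyMeasurable)
      ?_ (hmom.div_const 2) ?_
    · filter_upwards [hs_ne] with s hs
      refine ae_of_all _ fun x => ?_
      have hs2 : (0:ℝ) < s ^ 2 := by positivity
      have h1 : 0 ≤ 1 - Real.cos (s * x) := by linarith [Real.cos_le_one (s * x)]
      rw [Real.norm_eq_abs, abs_div, abs_of_nonneg h1, abs_of_pos hs2, div_le_iff₀ hs2]
      nlinarith [Real.one_sub_sq_div_two_le_cos (x := s * x)]
    · refine ae_of_all _ fun x => ?_
      rw [← tendsto_sub_nhds_zero_iff]
      apply squeeze_zero_norm' (a := fun s : ℝ => s ^ 2 * (x ^ 4 * (5 / 96)))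
      · filter_upwards [hsmall x, hs_ne] with s hsx hs
        have hs2 : (0:ℝ) < s ^ 2 := by positivity
        have hE := Real.cos_bound hsx
        have key : (1 - Real.cos (s * x)) / s ^ 2 - x ^ 2 / 2
            = -(Real.cos (s * x) - (1 - (s * x) ^ 2 / 2)) / s ^ 2 := by
          field_simp; ring
        rw [Real.norm_eq_abs, key, abs_div, abs_neg, abs_of_pos hs2, div_le_iff₀ hs2]
        have h4 : |s * x| ^ 4 = s ^ 4 * x ^ 4 := by
          rw [← abs_pow, mul_pow, abs_of_nonneg (by positivity)]
        nlinarith [hE]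
      · have hc : Continuous fun s : ℝ => s ^ 2 * (x ^ 4 * (5 / 96)) :=
          (continuous_pow 2).mul continuous_const
        have h0 := (hc.tendsto (0:ℝ)).mono_left (nhdsWithin_le_nhds (s := {0}ᶜ))
        simpa using h0
  -- limit of b
  have hb : Tendsto (fun s : ℝ => ∫ x : ℝ, (Real.sin (s * x) - s * x) / s ^ 2 ∂μ)
      (nhdsWithin (0:ℝ) {0}ᶜ) (nhds 0) := by
    have hb' : Tendsto (fun s : ℝ => ∫ x : ℝ, (Real.sin (s * x) - s * x) / s ^ 2 ∂μ)
        (nhdsWithin (0:ℝ) {0}ᶜ) (nhds (∫ _ : ℝ, (0:ℝ) ∂μ)) := by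
      refine tendsto_integral_filter_of_dominated_convergence (fun x : ℝ => x ^ 2)
        (Eventually.of_forall fun s =>
          (((Real.continuous_sin.comp (continuous_const.mul continuous_id)).sub
            (continuous_const.mul continuous_id)).div_const _).aestronglyMeasurable)
        ?_ hmom ?_
      · filter_upwards [hs_ne] with s hs
        refine ae_of_all _ fun x => ?_
        have hs2 : (0:ℝ) < s ^ 2 := by positivity
        have h1 := abs_sin_sub_le_sq (s * x)
        rw [Real.norm_eq_abs, abs_div, abs_of_pos hs2, div_le_iff₀ hs2]
        nlinarith [h1]
      · refine ae_of_all _ fun x => ?_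
        apply squeeze_zero_norm'
          (a := fun s : ℝ => s ^ 2 * (x ^ 4 * (5 / 96)) + |s| * (|x| ^ 3 / 6))
        · filter_upwards [hsmall x, hs_ne] with s hsx hs
          have hs2 : (0:ℝ) < s ^ 2 := by positivity
          have hE := Real.sin_bound hsx
          have key : (Real.sin (s * x) - s * x) / s ^ 2
              = (Real.sin (s * x) - (s * x - (s * x) ^ 3 / 6)) / s ^ 2 - s * x ^ 3 / 6 := by
            field_simp; ring
          rw [Real.norm_eq_abs, key]
          refine (abs_sub _ _).trans ?_
          gcongr
          · rw [abs_div, abs_of_pos hs2, div_le_iff₀ hs2]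
            have h4 : |s * x| ^ 4 = s ^ 4 * x ^ 4 := by
              rw [← abs_pow, mul_pow, abs_of_nonneg (by positivity)]
            have h5 : |s * x| ^ 5 ≤ |s * x| ^ 4 := by
              have := mul_le_mul_of_nonneg_left hsx (pow_nonneg (abs_nonneg (s * x)) 4)
              nlinarith [this]
            nlinarith [hE, h4, h5, pow_nonneg (abs_nonneg (s * x)) 4]
          · have h6 : |s * x ^ 3 / 6| = |s| * (|x| ^ 3 / 6) := by
              rw [abs_div, abs_mul, abs_pow]; norm_num; ring
            exact le_of_eq h6
        · have hc : Continuous fun s : ℝ => s ^ 2 * (x ^ 4 * (5 / 96)) + |s| * (|x| ^ 3 / 6) :=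
            ((continuous_pow 2).mul continuous_const).add (continuous_abs.mul continuous_const)
          have h0 := (hc.tendsto (0:ℝ)).mono_left (nhdsWithin_le_nhds (s := {0}ᶜ))
          simpa using h0
    simpa using hb'
  -- combine
  set A := fun s : ℝ => ∫ x : ℝ, (1 - Real.cos (s * x)) / s ^ 2 ∂μ with hA
  set B := fun s : ℝ => ∫ x : ℝ, (Real.sin (s * x) - s * x) / s ^ 2 ∂μ with hB
  have hM : ∫ x : ℝ, x ^ 2 / 2 ∂μ = (∫ x : ℝ, x ^ 2 ∂μ) / 2 := integral_div 2 _
  rw [hM] at ha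
  have htot : Tendsto
      (fun s : ℝ => -2 * A s + s ^ 2 * A s ^ 2 + m ^ 2 + 2 * s * m * B s + s ^ 2 * B s ^ 2)
      (nhdsWithin (0:ℝ) {0}ᶜ) (nhds (m ^ 2 - ∫ x : ℝ, x ^ 2 ∂μ)) := by
    have t1 := ha.const_mul (-2 : ℝ)
    have t2 := (hzero.pow 2).mul (ha.pow 2)
    have t3 := ((hzero.const_mul (2 : ℝ)).mul_const m).mul hb
    have t4 := (hzero.pow 2).mul (hb.pow 2)
    have total := (((t1.add t2).add (tendsto_const_nhds (x := m ^ 2))).add t3).add t4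
    have hval : m ^ 2 - (∫ x : ℝ, x ^ 2 ∂μ)
        = -2 * ((∫ x : ℝ, x ^ 2 ∂μ) / 2) + 0 ^ 2 * ((∫ x : ℝ, x ^ 2 ∂μ) / 2) ^ 2 + m ^ 2
          + 2 * 0 * m * 0 + 0 ^ 2 * 0 ^ 2 := by ring
    rw [hval]
    convert total using 2 <;> ring
  refine Tendsto.congr' ?_ htot
  filter_upwards [self_mem_nhdsWithin] with s hs
  have hs' : s ≠ 0 := hs
  rw [habs s, hcos_eq s hs', hsin_eq s hs']
  field_simp
  ring

/-- Measure-theoretic form of the critical `α = 1/2` Zeno limit: if `μ` is a Borel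
probability measure on `ℝ` with finite second moment, mean `m` and variance `σ² > 0`,
then `|μ̂(t/√N)|^(2N) → exp(-σ²t²)` for every `t`, where `μ̂(t) = ∫ exp(-itλ)dμ(λ)`. -/
theorem fourier_gaussian_limit
    (μ : Measure ℝ) [IsProbabilityMeasure μ]
    (hmom : Integrable (fun lam : ℝ => lam ^ 2) μ)
    (m σsq : ℝ) (hm : m = ∫ lam : ℝ, lam ∂μ)
    (hσ : σsq = ∫ lam : ℝ, (lam - m) ^ 2 ∂μ) (hσpos : 0 < σsq)
    (t : ℝ) :
    Tendsto
      (fun N : ℕ =>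
        ‖(∫ lam : ℝ, Complex.exp (-Complex.I * (t / Real.sqrt N) * lam) ∂μ)‖ ^ (2 * N))
      atTop (nhds (Real.exp (-(σsq * t ^ 2)))) := by
  by_cases ht : t = 0
  · subst ht
    have hfun : ∀ N : ℕ,
        ‖(∫ lam : ℝ, Complex.exp (-Complex.I * ((0:ℝ) / Real.sqrt N) * lam) ∂μ)‖ ^ (2 * N)
          = 1 := by
      intro N
      simp
    simp only [hfun]
    norm_num
  · have hIntId : Integrable (fun x : ℝ => x) μ := by
      refine ((integrable_const 1).add hmom).mono' aestronglyMeasurable_id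
        (ae_of_all _ fun x => ?_)
      have : |x| ≤ 1 + x ^ 2 := by nlinarith [sq_nonneg (|x| - 1), sq_abs x]
      simpa using this
    have hvar : σsq = (∫ x : ℝ, x ^ 2 ∂μ) - m ^ 2 := by
      have hexp : (fun x : ℝ => (x - m) ^ 2) = fun x : ℝ => x ^ 2 - 2 * m * x + m ^ 2 := by
        funext x; ring
      have hi2 : Integrable (fun x : ℝ => 2 * m * x) μ := hIntId.const_mul (2 * m)
      have hi1 : Integrable (fun x : ℝ => x ^ 2 - 2 * m * x) μ := hmom.sub hi2
      have hkey : ∫ x : ℝ, (x - m) ^ 2 ∂μ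
          = (∫ x : ℝ, x ^ 2 ∂μ) - 2 * m * (∫ x : ℝ, x ∂μ) + m ^ 2 := by
        rw [hexp, integral_add hi1 (integrable_const _),
          integral_sub hmom hi2, integral_const_mul, integral_const]
        simp [measure_univ]
      rw [hσ, hkey, ← hm]; ring
    have hsqrtN : Tendsto (fun N : ℕ => Real.sqrt N) atTop atTop := by
      have h1 := (tendsto_rpow_atTop (by norm_num : (0:ℝ) < 1/2)).comp
        tendsto_natCast_atTop_atTop
      refine h1.congr fun N => ?_
      simp only [Function.comp_apply]
      rw [Real.sqrt_eq_rpow]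
    have hsN : Tendsto (fun N : ℕ => t / Real.sqrt N) atTop (nhdsWithin 0 {0}ᶜ) := by
      rw [tendsto_nhdsWithin_iff]
      refine ⟨tendsto_const_nhds.div_atTop hsqrtN, ?_⟩
      filter_upwards [eventually_gt_atTop 0] with N hN
      have hs : (0:ℝ) < Real.sqrt N := Real.sqrt_pos.2 (by exact_mod_cast hN)
      simpa using div_ne_zero ht hs.ne'
    have hG := (fourier_sq_tendsto μ hmom m hm).comp hsN
    simp only [Function.comp_def] at hG
    have hc := hG.const_mul (t ^ 2)
    have hlim := tendsto_one_add_div_pow' hc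
    have hval : t ^ 2 * (m ^ 2 - ∫ lam : ℝ, lam ^ 2 ∂μ) = -(σsq * t ^ 2) := by
      rw [hvar]; ring
    rw [hval] at hlim
    refine hlim.congr' ?_
    filter_upwards [eventually_ge_atTop 1] with N hN
    have hNpos : (0:ℝ) < N := by exact_mod_cast hN
    have hsne : t / Real.sqrt N ≠ 0 :=
      div_ne_zero ht (Real.sqrt_pos.2 hNpos).ne'
    have hs2 : (t / Real.sqrt N) ^ 2 = t ^ 2 / N := by
      rw [div_pow, Real.sq_sqrt hNpos.le]
    rw [pow_mul]
    congr 1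
    have ht2 : t ^ 2 = N * (t / Real.sqrt N) ^ 2 := by
      rw [hs2]; field_simp
    rw [ht2]
    push_cast
    field_simp
    ring
end
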